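/- arXiv:2105.12342 — 4 statements merged into one kernel-verified Lean document; each statement's English description precedes it below -/
import Mathlib

section
/- Dual characterization of empirical DRO (Proposition 2.1). Let δ > 0, let n ≥ 1, let p = (p_1, …, p_n) be a probability vector with p_i > 0 for all i, and let f_1, …, f_n be real numbers. Then the minimum over all probability vectors q = (q_1, …, q_n) (q_i ≥ 0, Σ_i q_i = 1) of Σ_i q_i f_i + (1/δ) Σ_i p_i φ(q_i/p_i) equals the supremum over c ∈ ℝ of −(1/δ) Σ_i p_i φ*(−δ(f_i + c)) − c, where both sides are interpreted as elements of the extended reals. -/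
open scoped BigOperators

/-- The convex conjugate `φ*(ζ) = sup_z (ζ z − φ(z))` of an extended-real-valued
function `φ : ℝ → ℝ ∪ {+∞}`. -/
noncomputable def phiStar (φ : ℝ → EReal) (ζ : ℝ) : EReal :=
  ⨆ z : ℝ, ((ζ * z : ℝ) : EReal) - φ z

namespace DROaux

open Finset

/-! ### Generic `EReal` helpers -/

lemma coe_sum {ι : Type*} (s : Finset ι) (g : ι → ℝ) :
    ((∑ i ∈ s, g i : ℝ) : EReal) = ∑ i ∈ s, (g i : EReal) := by
  induction s using Finset.cons_induction with
  | empty => simp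
  | cons j s hj ih => rw [Finset.sum_cons, Finset.sum_cons, EReal.coe_add, ih]

lemma sum_ne_bot {ι : Type*} (s : Finset ι) (g : ι → EReal) (h : ∀ i ∈ s, g i ≠ ⊥) :
    ∑ i ∈ s, g i ≠ ⊥ := by
  induction s using Finset.cons_induction with
  | empty => simp
  | cons j s hj ih =>
    rw [Finset.sum_cons, Ne, EReal.add_eq_bot_iff]
    push_neg
    exact ⟨h j (Finset.mem_cons_self _ _), ih fun i hi => h i (Finset.mem_cons_of_mem hi)⟩

lemma sum_eq_top {ι : Type*} (s : Finset ι) (g : ι → EReal) {j : ι} (hj : j ∈ s)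
    (htop : g j = ⊤) (hbot : ∀ i ∈ s, g i ≠ ⊥) : ∑ i ∈ s, g i = ⊤ := by
  classical
  rw [← Finset.add_sum_erase _ _ hj, htop,
    EReal.top_add_of_ne_bot (sum_ne_bot _ _ fun i hi => hbot i (Finset.mem_of_mem_erase hi))]

lemma le_of_forall_lt_coe {x y : EReal} (h : ∀ r : ℝ, (r : EReal) < x → (r : EReal) ≤ y) :
    x ≤ y := by
  by_contra hc
  push_neg at hc
  obtain ⟨m, h1, h2⟩ := EReal.exists_between_coe_real hc
  exact absurd (h m h2) (not_le.2 h1)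

lemma le_coe_of_forall_eps {x : EReal} {c : ℝ} (h : ∀ ε : ℝ, 0 < ε → x ≤ ((c + ε : ℝ) : EReal)) :
    x ≤ (c : EReal) := by
  by_contra hc
  push_neg at hc
  obtain ⟨m, h1, h2⟩ := EReal.exists_between_coe_real hc
  have hm : c < m := EReal.coe_lt_coe_iff.1 h1
  have := h ((m - c) / 2) (by linarith)
  have h3 : ((c + (m - c) / 2 : ℝ) : EReal) < (m : EReal) := by
    apply EReal.coe_lt_coe_iff.2; linarith
  exact absurd ((this.trans_lt h3).trans h2) (lt_irrefl _)

lemma coe_mul_lt {w u : ℝ} (hw : 0 < w) {t : EReal} (h : (u : EReal) < t) :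
    ((w * u : ℝ) : EReal) < (w : EReal) * t := by
  induction t with
  | bot => exact absurd h (by simp)
  | coe t =>
    rw [← EReal.coe_mul]
    exact EReal.coe_lt_coe_iff.2 (mul_lt_mul_of_pos_left (EReal.coe_lt_coe_iff.1 h) hw)
  | top => rw [EReal.coe_mul_top_of_pos hw]; exact EReal.coe_lt_top _

lemma lsc_const_mul {α : Type*} [TopologicalSpace α] {F : α → EReal} {w : ℝ} (hw : 0 < w)
    (hF : LowerSemicontinuous F) : LowerSemicontinuous fun x => (w : EReal) * F x := by
  intro x y hy
  simp only at hy
  rcases eq_or_ne (F x) ⊤ with htop | htop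
  · induction y with
    | bot =>
      filter_upwards [hF x 0 (by beta_reduce; rw [htop]; exact EReal.zero_lt_top)] with a ha
      have : ((w * 0 : ℝ) : EReal) < (w : EReal) * F a := coe_mul_lt hw ha
      exact lt_of_le_of_lt bot_le this
    | coe m =>
      filter_upwards [hF x ((m / w + 1 : ℝ) : EReal) (by beta_reduce; rw [htop]; exact EReal.coe_lt_top _)] with a ha
      have h2 : ((w * (m / w + 1) : ℝ) : EReal) < (w : EReal) * F a := coe_mul_lt hw ha
      refine lt_trans (EReal.coe_lt_coe_iff.2 ?_) h2
      rw [mul_add, mul_div_cancel₀ _ (ne_of_gt hw)]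
      linarith
    | top => exact absurd hy (by simp)
  · rcases eq_or_ne (F x) ⊥ with hbot | hbot
    · rw [hbot, EReal.coe_mul_bot_of_pos hw] at hy
      exact absurd hy (by simp)
    · have htx : F x = (((F x).toReal : ℝ) : EReal) := (EReal.coe_toReal htop hbot).symm
      set t : ℝ := (F x).toReal with ht
      rw [htx, ← EReal.coe_mul] at hy
      induction y with
      | bot =>
        filter_upwards [hF x ((t - 1 : ℝ) : EReal)
          (by beta_reduce; rw [htx]; exact EReal.coe_lt_coe_iff.2 (by linarith))] with a ha
        exact lt_of_lt_of_le (EReal.bot_lt_coe (w * (t - 1))) (le_of_lt (coe_mul_lt hw ha))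
      | coe m =>
        have hm : m < w * t := EReal.coe_lt_coe_iff.1 hy
        have hmt : m / w < t := by rw [div_lt_iff₀ hw]; linarith [mul_comm w t]
        set u : ℝ := (m / w + t) / 2 with hu
        have hu1 : m / w < u := by simp only [hu]; linarith
        have hu2 : u < t := by simp only [hu]; linarith
        filter_upwards [hF x u (by beta_reduce; rw [htx]; exact EReal.coe_lt_coe_iff.2 hu2)] with a ha
        have h3 : ((w * u : ℝ) : EReal) < (w : EReal) * F a := coe_mul_lt hw ha
        refine lt_trans (EReal.coe_lt_coe_iff.2 ?_) h3
        have : m = w * (m / w) := by field_simp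
        rw [this]
        exact mul_lt_mul_of_pos_left hu1 hw
      | top => exact absurd hy (by simp)

lemma lsc_add_nonneg {α : Type*} [TopologicalSpace α] {F G : α → EReal}
    (hF : LowerSemicontinuous F) (hG : LowerSemicontinuous G)
    (hF0 : ∀ x, 0 ≤ F x) (hG0 : ∀ x, 0 ≤ G x) :
    LowerSemicontinuous fun x => F x + G x := by
  refine hF.add' hG fun x => EReal.continuousAt_add ?_ ?_
  · exact Or.inr (EReal.bot_lt_zero.trans_le (hG0 x)).ne'
  · exact Or.inl (EReal.bot_lt_zero.trans_le (hF0 x)).ne'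

lemma lsc_sum_nonneg {α : Type*} [TopologicalSpace α] {ι : Type*} (s : Finset ι)
    (F : ι → α → EReal) (h : ∀ i ∈ s, LowerSemicontinuous (F i))
    (h0 : ∀ i ∈ s, ∀ x, 0 ≤ F i x) :
    LowerSemicontinuous fun x => ∑ i ∈ s, F i x := by
  induction s using Finset.cons_induction with
  | empty => simpa using lowerSemicontinuous_const
  | cons j s hj ih =>
    simp only [Finset.sum_cons]
    exact lsc_add_nonneg (h j (Finset.mem_cons_self _ _))
      (ih (fun i hi => h i (Finset.mem_cons_of_mem hi))
        (fun i hi => h0 i (Finset.mem_cons_of_mem hi)))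
      (h0 j (Finset.mem_cons_self _ _))
      (fun x => Finset.sum_nonneg fun i hi => h0 i (Finset.mem_cons_of_mem hi) x)

/-! ### Problem-specific definitions -/

variable {n : ℕ}

/-- The primal objective. -/
noncomputable def obj (φ : ℝ → EReal) (p f : Fin n → ℝ) (δ : ℝ) (q : Fin n → ℝ) : EReal :=
  ((∑ i, q i * f i : ℝ) : EReal) + ((1 / δ : ℝ) : EReal) * ∑ i, ((p i : ℝ) : EReal) * φ (q i / p i)

/-- Feasible set with total mass `s`. -/
def Feas (n : ℕ) (s : ℝ) : Set (Fin n → ℝ) := {q | (∀ i, 0 ≤ q i) ∧ ∑ i, q i = s}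

/-- Value function of the perturbed problem. -/
noncomputable def hfun (φ : ℝ → EReal) (p f : Fin n → ℝ) (δ : ℝ) (s : ℝ) : EReal :=
  sInf (obj φ p f δ '' Feas n s)

section Ctx

variable {φ : ℝ → EReal} {p f : Fin n → ℝ} {δ : ℝ}
variable (hp : ∀ i, 0 < p i) (hδ : 0 < δ) (hφ0 : ∀ z : ℝ, 0 ≤ φ z)

include hp hδ hφ0 in
lemma obj_ge_linear (q : Fin n → ℝ) :
    ((∑ i, q i * f i : ℝ) : EReal) ≤ obj φ p f δ q := by
  unfold obj
  refine le_add_of_nonneg_right (mul_nonneg ?_ ?_)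
  · exact EReal.coe_nonneg.2 (by positivity)
  · exact Finset.sum_nonneg fun i _ => mul_nonneg (EReal.coe_nonneg.2 (hp i).le) (hφ0 _)

include hp hδ hφ0 in
lemma obj_ne_bot (q : Fin n → ℝ) : obj φ p f δ q ≠ ⊥ :=
  ((EReal.bot_lt_coe _).trans_le (obj_ge_linear hp hδ hφ0 q)).ne'

lemma obj_real (q g : Fin n → ℝ) (hg : ∀ i, φ (q i / p i) = ((g i : ℝ) : EReal)) :
    obj φ p f δ q = ((∑ i, q i * f i + (1 / δ) * ∑ i, p i * g i : ℝ) : EReal) := by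
  unfold obj
  have hterm : ∀ i : Fin n, ((p i : ℝ) : EReal) * φ (q i / p i) = ((p i * g i : ℝ) : EReal) :=
    fun i => by rw [hg i, ← EReal.coe_mul]
  rw [Finset.sum_congr rfl fun i _ => hterm i, ← coe_sum, ← EReal.coe_mul, ← EReal.coe_add]

include hp hδ hφ0 in
lemma exists_g_of_obj_le {q : Fin n → ℝ} {u : ℝ} (h : obj φ p f δ q ≤ (u : EReal)) :
    ∃ g : Fin n → ℝ, (∀ i, 0 ≤ g i) ∧ (∀ i, φ (q i / p i) = ((g i : ℝ) : EReal)) ∧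
      ∑ i, q i * f i + (1 / δ) * ∑ i, p i * g i ≤ u := by
  have hB : ∑ i, ((p i : ℝ) : EReal) * φ (q i / p i) ≠ ⊤ := by
    intro hB
    rw [obj, hB, EReal.mul_top_of_pos (EReal.coe_pos.2 (by positivity)),
      EReal.coe_add_top] at h
    exact absurd h (EReal.coe_lt_top u).not_ge
  have hterm : ∀ i : Fin n, ((p i : ℝ) : EReal) * φ (q i / p i) ≠ ⊤ := by
    intro i hi
    exact hB (sum_eq_top Finset.univ _ (Finset.mem_univ i) hi
      (fun j _ => ((EReal.bot_lt_coe 0).trans_le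
        (mul_nonneg (EReal.coe_nonneg.2 (hp j).le) (hφ0 _))).ne'))
  have hφtop : ∀ i : Fin n, φ (q i / p i) ≠ ⊤ := by
    intro i hi
    exact hterm i (by rw [hi, EReal.coe_mul_top_of_pos (hp i)])
  have hφbot : ∀ i : Fin n, φ (q i / p i) ≠ ⊥ :=
    fun i => ((EReal.bot_lt_coe 0).trans_le (hφ0 _)).ne'
  refine ⟨fun i => (φ (q i / p i)).toReal, fun i => ?_, fun i => ?_, ?_⟩
  · have := hφ0 (q i / p i)
    rw [← EReal.coe_toReal (hφtop i) (hφbot i)] at this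
    exact_mod_cast this
  · exact (EReal.coe_toReal (hφtop i) (hφbot i)).symm
  · have := obj_real (φ := φ) (f := f) (δ := δ) q (fun i => (φ (q i / p i)).toReal)
      (fun i => (EReal.coe_toReal (hφtop i) (hφbot i)).symm)
    rw [this] at h
    exact EReal.coe_le_coe_iff.1 h

lemma hfun_le {q : Fin n → ℝ} {s : ℝ} (hq : q ∈ Feas n s) :
    hfun φ p f δ s ≤ obj φ p f δ q :=
  sInf_le ⟨q, hq, rfl⟩

lemma exists_lt_of_hfun_lt {s : ℝ} {x : EReal} (h : hfun φ p f δ s < x) :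
    ∃ q ∈ Feas n s, obj φ p f δ q < x := by
  obtain ⟨y, ⟨q, hq, rfl⟩, hy⟩ := sInf_lt_iff.1 h
  exact ⟨q, hq, hy⟩

include hp hδ hφ0 in
lemma hfun_lb (s : ℝ) : ((-(|s| * ∑ i, |f i|) : ℝ) : EReal) ≤ hfun φ p f δ s := by
  refine le_sInf ?_
  rintro y ⟨q, ⟨hq0, hqs⟩, rfl⟩
  refine le_trans ?_ (obj_ge_linear hp hδ hφ0 q)
  apply EReal.coe_le_coe_iff.2
  have hs0 : 0 ≤ s := hqs ▸ Finset.sum_nonneg fun i _ => hq0 i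
  rw [abs_of_nonneg hs0]
  have : -(s * ∑ i, |f i|) = ∑ i, -(s * |f i|) := by
    rw [Finset.mul_sum, Finset.sum_neg_distrib]
  rw [this]
  refine Finset.sum_le_sum fun i _ => ?_
  have hqis : q i ≤ s := hqs ▸ Finset.single_le_sum (fun j _ => hq0 j) (Finset.mem_univ i)
  nlinarith [mul_le_mul_of_nonneg_left (neg_abs_le (f i)) (hq0 i),
    mul_le_mul_of_nonneg_right hqis (abs_nonneg (f i))]

include hp hδ hφ0 in
lemma hfun_ne_bot (s : ℝ) : hfun φ p f δ s ≠ ⊥ :=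
  ((EReal.bot_lt_coe _).trans_le (hfun_lb hp hδ hφ0 s)).ne'

variable (hconv : ∀ x y a b : ℝ, 0 ≤ a → 0 ≤ b → a + b = 1 →
      φ (a * x + b * y) ≤ (a : EReal) * φ x + (b : EReal) * φ y)

include hp hδ hφ0 hconv in
lemma obj_convR {θ u w : ℝ} {q q' : Fin n → ℝ} (hθ0 : 0 < θ) (hθ1 : θ < 1)
    (hq : obj φ p f δ q ≤ (u : EReal)) (hq' : obj φ p f δ q' ≤ (w : EReal)) :
    obj φ p f δ (fun i => θ * q i + (1 - θ) * q' i) ≤ ((θ * u + (1 - θ) * w : ℝ) : EReal) := by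
  obtain ⟨g, hg0, hg, hsum⟩ := exists_g_of_obj_le hp hδ hφ0 hq
  obtain ⟨g', hg0', hg', hsum'⟩ := exists_g_of_obj_le hp hδ hφ0 hq'
  have key : ∀ i : Fin n, φ ((θ * q i + (1 - θ) * q' i) / p i)
      ≤ ((θ * g i + (1 - θ) * g' i : ℝ) : EReal) := by
    intro i
    have harg : (θ * q i + (1 - θ) * q' i) / p i
        = θ * (q i / p i) + (1 - θ) * (q' i / p i) := by
      field_simp
    rw [harg]
    refine le_trans (hconv _ _ θ (1 - θ) hθ0.le (by linarith) (by ring)) ?_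
    rw [hg i, hg' i, ← EReal.coe_mul, ← EReal.coe_mul, ← EReal.coe_add]
  have hmtop : ∀ i, φ ((θ * q i + (1 - θ) * q' i) / p i) ≠ ⊤ :=
    fun i => (lt_of_le_of_lt (key i) (EReal.coe_lt_top _)).ne
  have hmbot : ∀ i, φ ((θ * q i + (1 - θ) * q' i) / p i) ≠ ⊥ :=
    fun i => ((EReal.bot_lt_coe 0).trans_le (hφ0 _)).ne'
  set m : Fin n → ℝ := fun i => (φ ((θ * q i + (1 - θ) * q' i) / p i)).toReal with hm
  have hmeq : ∀ i, φ ((θ * q i + (1 - θ) * q' i) / p i) = ((m i : ℝ) : EReal) :=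
    fun i => (EReal.coe_toReal (hmtop i) (hmbot i)).symm
  have hmle : ∀ i, m i ≤ θ * g i + (1 - θ) * g' i := by
    intro i
    have h2 := key i
    rw [hmeq i] at h2
    exact_mod_cast h2
  rw [obj_real (φ := φ) (f := f) (δ := δ) _ m hmeq]
  apply EReal.coe_le_coe_iff.2
  have hL : ∑ i, (θ * q i + (1 - θ) * q' i) * f i
      = θ * ∑ i, q i * f i + (1 - θ) * ∑ i, q' i * f i := by
    rw [Finset.mul_sum, Finset.mul_sum, ← Finset.sum_add_distrib]
    exact Finset.sum_congr rfl fun i _ => by ring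
  have hG : ∑ i, p i * m i ≤ θ * ∑ i, p i * g i + (1 - θ) * ∑ i, p i * g' i := by
    rw [Finset.mul_sum, Finset.mul_sum, ← Finset.sum_add_distrib]
    refine Finset.sum_le_sum fun i _ => ?_
    have h3 := hmle i
    nlinarith [hp i]
  have h1δ : (0:ℝ) < 1 / δ := by positivity
  have e1 := mul_le_mul_of_nonneg_left hsum hθ0.le
  have e2 := mul_le_mul_of_nonneg_left hsum' (by linarith : (0:ℝ) ≤ 1 - θ)
  have e3 := mul_le_mul_of_nonneg_left hG h1δ.le
  calc ∑ i, (θ * q i + (1 - θ) * q' i) * f i + 1 / δ * ∑ i, p i * m i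
      ≤ θ * ∑ i, q i * f i + (1 - θ) * ∑ i, q' i * f i
        + 1 / δ * (θ * ∑ i, p i * g i + (1 - θ) * ∑ i, p i * g' i) := by
        rw [hL]; linarith
    _ = θ * (∑ i, q i * f i + 1 / δ * ∑ i, p i * g i)
        + (1 - θ) * (∑ i, q' i * f i + 1 / δ * ∑ i, p i * g' i) := by ring
    _ ≤ θ * u + (1 - θ) * w := by linarith

include hp hδ hφ0 hconv in
lemma hfun_convR {x z θ ux uz : ℝ} (hθ0 : 0 < θ) (hθ1 : θ < 1)
    (hx : hfun φ p f δ x ≤ (ux : EReal)) (hz : hfun φ p f δ z ≤ (uz : EReal)) :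
    hfun φ p f δ (θ * x + (1 - θ) * z) ≤ ((θ * ux + (1 - θ) * uz : ℝ) : EReal) := by
  apply le_coe_of_forall_eps
  intro ε hε
  obtain ⟨qx, hqx, hqxo⟩ := exists_lt_of_hfun_lt (φ := φ) (p := p) (f := f) (δ := δ)
    (lt_of_le_of_lt hx (EReal.coe_lt_coe_iff.2 (by linarith : ux < ux + ε)))
  obtain ⟨qz, hqz, hqzo⟩ := exists_lt_of_hfun_lt (φ := φ) (p := p) (f := f) (δ := δ)
    (lt_of_le_of_lt hz (EReal.coe_lt_coe_iff.2 (by linarith : uz < uz + ε)))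
  have hmid : (fun i => θ * qx i + (1 - θ) * qz i) ∈ Feas n (θ * x + (1 - θ) * z) := by
    constructor
    · intro i
      have h1 := hqx.1 i; have h2 := hqz.1 i
      show 0 ≤ θ * qx i + (1 - θ) * qz i
      nlinarith
    · rw [Finset.sum_add_distrib, ← Finset.mul_sum, ← Finset.mul_sum, hqx.2, hqz.2]
  have hcv := obj_convR hp hδ hφ0 hconv hθ0 hθ1 hqxo.le hqzo.le
  have heq : θ * (ux + ε) + (1 - θ) * (uz + ε) = θ * ux + (1 - θ) * uz + ε := by ring
  rw [heq] at hcv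
  exact le_trans (hfun_le hmid) hcv

variable (hlsc : LowerSemicontinuous φ)

include hp hδ hφ0 hlsc in
lemma isClosed_obj_sublevel (r' : ℝ) :
    IsClosed {q : Fin n → ℝ | obj φ p f δ q ≤ (r' : EReal)} := by
  have hBlsc : LowerSemicontinuous (fun q : Fin n → ℝ =>
      ((1 / δ : ℝ) : EReal) * ∑ i, ((p i : ℝ) : EReal) * φ (q i / p i)) := by
    apply lsc_const_mul (by positivity)
    apply lsc_sum_nonneg Finset.univ (fun i (q : Fin n → ℝ) => ((p i : ℝ) : EReal) * φ (q i / p i))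
    · intro i _
      exact lsc_const_mul (hp i) (LowerSemicontinuous.comp hlsc (by fun_prop : Continuous fun q : Fin n → ℝ => q i / p i))
    · intro i _ x
      exact mul_nonneg (EReal.coe_nonneg.2 (hp i).le) (hφ0 _)
  have hB0 : ∀ q : Fin n → ℝ,
      0 ≤ ((1 / δ : ℝ) : EReal) * ∑ i, ((p i : ℝ) : EReal) * φ (q i / p i) := fun q =>
    mul_nonneg (EReal.coe_nonneg.2 (by positivity))
      (Finset.sum_nonneg fun i _ => mul_nonneg (EReal.coe_nonneg.2 (hp i).le) (hφ0 _))
  set L : (Fin n → ℝ) → ℝ := fun q => ∑ i, q i * f i with hLdef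
  have hLc : Continuous L :=
    continuous_finset_sum _ fun i _ => (continuous_apply i).mul continuous_const
  set B : (Fin n → ℝ) → EReal :=
    fun q => ((1 / δ : ℝ) : EReal) * ∑ i, ((p i : ℝ) : EReal) * φ (q i / p i) with hBdef
  rw [← isOpen_compl_iff, isOpen_iff_mem_nhds]
  intro q0 hq0
  simp only [Set.mem_compl_iff, Set.mem_setOf_eq, not_le] at hq0
  have hq0' : (r' : EReal) < ((L q0 : ℝ) : EReal) + B q0 := hq0
  obtain ⟨zz, hz1, hz2⟩ : ∃ zz : ℝ, r' - L q0 < zz ∧ (zz : EReal) < B q0 := by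
    rcases eq_or_ne (B q0) ⊤ with htop | htop
    · exact ⟨r' - L q0 + 1, by linarith, by rw [htop]; exact EReal.coe_lt_top _⟩
    · have hbot : B q0 ≠ ⊥ := ((EReal.bot_lt_coe 0).trans_le (hB0 q0)).ne'
      set d : ℝ := (B q0).toReal with hd
      have hdeq : B q0 = ((d : ℝ) : EReal) := (EReal.coe_toReal htop hbot).symm
      rw [hdeq, ← EReal.coe_add] at hq0'
      have : r' < L q0 + d := by exact_mod_cast hq0'
      exact ⟨(r' - L q0 + d) / 2, by linarith, by
        rw [hdeq]; exact EReal.coe_lt_coe_iff.2 (by linarith)⟩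
  have hgt : r' - zz < L q0 := by linarith
  have hLev : ∀ᶠ q in nhds q0, r' - zz < L q :=
    (hLc.tendsto q0).eventually (eventually_gt_nhds hgt)
  have hBev : ∀ᶠ q in nhds q0, (zz : EReal) < B q := hBlsc q0 (zz : EReal) hz2
  filter_upwards [hLev, hBev] with q hLq hBq
  simp only [Set.mem_compl_iff, Set.mem_setOf_eq, not_le]
  have : ((r' : ℝ) : EReal) = ((r' - zz : ℝ) : EReal) + (zz : EReal) := by
    rw [← EReal.coe_add]; norm_num
  calc ((r' : ℝ) : EReal) = ((r' - zz : ℝ) : EReal) + (zz : EReal) := this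
    _ < ((L q : ℝ) : EReal) + B q := EReal.add_lt_add (EReal.coe_lt_coe_iff.2 hLq) hBq
    _ = obj φ p f δ q := rfl

include hp hδ hφ0 hlsc in
lemma window {r' : ℝ} (hr' : (r' : EReal) < hfun φ p f δ 1) :
    ∃ η : ℝ, 0 < η ∧ ∀ s : ℝ, |s - 1| < η → (r' : EReal) ≤ hfun φ p f δ s := by
  by_contra hW
  push_neg at hW
  have hQ : ∀ k : ℕ, ∃ q : Fin n → ℝ, (∀ i, 0 ≤ q i) ∧ |∑ i, q i - 1| < 1 / (k + 1) ∧
      obj φ p f δ q < (r' : EReal) := by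
    intro k
    obtain ⟨s, hs1, hs2⟩ := hW (1 / (k + 1)) (by positivity)
    obtain ⟨q, ⟨hq0, hqs⟩, hqo⟩ := exists_lt_of_hfun_lt hs2
    exact ⟨q, hq0, by rw [hqs]; exact hs1, hqo⟩
  choose Q hQ0 hQs hQo using hQ
  set A : ℕ → Set (Fin n → ℝ) := fun k =>
    ({q | ∀ i, q i ∈ Set.Icc (0:ℝ) 2} ∩
      {q | ∑ i, q i ∈ Set.Icc (1 - 1 / (k + 1) : ℝ) (1 + 1 / (k + 1))}) ∩
      {q | obj φ p f δ q ≤ (r' : EReal)} with hA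
  have hsumC : Continuous fun q : Fin n → ℝ => ∑ i, q i :=
    continuous_finset_sum _ fun i _ => continuous_apply i
  have hclosed : ∀ k, IsClosed (A k) := by
    intro k
    refine IsClosed.inter (IsClosed.inter ?_ (IsClosed.preimage hsumC isClosed_Icc))
      (isClosed_obj_sublevel hp hδ hφ0 hlsc r')
    have : {q : Fin n → ℝ | ∀ i, q i ∈ Set.Icc (0:ℝ) 2}
        = ⋂ i, (fun q : Fin n → ℝ => q i) ⁻¹' Set.Icc (0:ℝ) 2 := by
      ext q; simp [Set.mem_iInter]
    rw [this]
    exact isClosed_iInter fun i => IsClosed.preimage (continuous_apply i) isClosed_Icc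
  have hk1 : ∀ k : ℕ, (0:ℝ) < 1 / (k + 1) := fun k => by positivity
  have hk2 : ∀ k : ℕ, (1:ℝ) / (k + 1) ≤ 1 := by
    intro k
    rw [div_le_one (by positivity)]
    norm_num
  have hne : ∀ k, (A k).Nonempty := by
    intro k
    refine ⟨Q k, ⟨⟨fun i => ⟨hQ0 k i, ?_⟩, ?_⟩, (hQo k).le⟩⟩
    · have h1 : ∑ i, Q k i < 1 + 1 / (k + 1) := by
        have := abs_lt.1 (hQs k); linarith [this.2]
      have h2 : Q k i ≤ ∑ j, Q k j :=
        Finset.single_le_sum (fun j _ => hQ0 k j) (Finset.mem_univ i)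
      linarith [hk2 k]
    · have := abs_lt.1 (hQs k)
      exact ⟨by linarith [this.1], by linarith [this.2]⟩
  have hanti : ∀ k, A (k + 1) ⊆ A k := by
    intro k q hq
    refine ⟨⟨hq.1.1, ?_⟩, hq.2⟩
    have hmono : (1:ℝ) / (k + 1 + 1) ≤ 1 / (k + 1) := by
      apply div_le_div_of_nonneg_left (by norm_num) (by positivity)
      norm_num
    obtain ⟨ha, hb⟩ := hq.1.2
    push_cast at ha hb ⊢
    constructor <;> [linarith; linarith]
  have hcpt : IsCompact (A 0) := by
    refine IsCompact.of_isClosed_subset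
      (isCompact_univ_pi fun _ : Fin n => isCompact_Icc (a := (0:ℝ)) (b := 2))
      (hclosed 0) ?_
    intro q hq
    rw [Set.mem_univ_pi]
    exact fun i => hq.1.1 i
  obtain ⟨qs, hqs⟩ := IsCompact.nonempty_iInter_of_sequence_nonempty_isCompact_isClosed
    A hanti hne hcpt hclosed
  simp only [Set.mem_iInter] at hqs
  have hq0 : ∀ i, 0 ≤ qs i := fun i => ((hqs 0).1.1 i).1
  have hsum1 : ∑ i, qs i = 1 := by
    by_contra hne1
    have hpos : 0 < |∑ i, qs i - 1| := abs_pos.2 (sub_ne_zero.2 hne1)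
    obtain ⟨k, hk⟩ := exists_nat_one_div_lt hpos
    have hmem := (hqs k).1.2
    obtain ⟨ha, hb⟩ := hmem
    have : |∑ i, qs i - 1| ≤ 1 / (k + 1) := by
      rw [abs_le]
      push_cast at ha hb ⊢
      constructor <;> [linarith; linarith]
    linarith
  have hle : hfun φ p f δ 1 ≤ obj φ p f δ qs := hfun_le ⟨hq0, hsum1⟩
  exact absurd hr' (not_lt.2 (le_trans hle (hqs 0).2))

set_option maxHeartbeats 1600000 in
include hp hδ hφ0 hconv hlsc in
lemma claim_minorant {r : ℝ} (hr : (r : EReal) < hfun φ p f δ 1)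
    (hv : ∃ v : ℝ, hfun φ p f δ 1 = (v : EReal)) :
    ∃ lam : ℝ, ∀ s : ℝ, ((r + lam * (s - 1) : ℝ) : EReal) ≤ hfun φ p f δ s := by
  obtain ⟨v, hv⟩ := hv
  have hrv : r < v := by
    rw [hv] at hr
    exact_mod_cast hr
  set rr : ℝ := (r + v) / 2 with hrr
  have hrrv : rr < v := by rw [hrr]; linarith
  have hrrr : r < rr := by rw [hrr]; linarith
  obtain ⟨η, hη, hwin⟩ := window hp hδ hφ0 hlsc
    (show (rr : EReal) < hfun φ p f δ 1 by rw [hv]; exact_mod_cast hrrv)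
  set e : ℝ := min η 1 with he
  have he0 : 0 < e := lt_min hη one_pos
  have heη : e ≤ η := min_le_left _ _
  set a : ℝ := 1 - e / 2 with ha
  set b : ℝ := 1 + e / 2 with hb
  have ha1 : a < 1 := by rw [ha]; linarith
  have h1b : 1 < b := by rw [hb]; linarith
  have hwina : ∀ s : ℝ, a ≤ s → s ≤ b → (rr : EReal) ≤ hfun φ p f δ s := by
    intro s h1 h2
    apply hwin
    rw [ha] at h1
    rw [hb] at h2
    rw [abs_lt]
    constructor <;> [linarith; linarith]
  have hne_bot : ∀ s : ℝ, hfun φ p f δ s ≠ ⊥ := hfun_ne_bot hp hδ hφ0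
  have real_of : ∀ s : ℝ, hfun φ p f δ s ≠ ⊤ →
      hfun φ p f δ s = (((hfun φ p f δ s).toReal : ℝ) : EReal) :=
    fun s h => (EReal.coe_toReal h (hne_bot s)).symm
  -- convexity: value at midpoint m = θx + (1-θ)z, cleared-denominator form
  have mid2 : ∀ x z m hx hz hm : ℝ, x < m → m < z →
      hfun φ p f δ x ≤ (hx : EReal) → hfun φ p f δ z ≤ (hz : EReal) →
      hfun φ p f δ m = (hm : EReal) → hm * (z - x) ≤ (z - m) * hx + (m - x) * hz := by
    intro x z m hx hz hm hxm hmz hfx hfz hfm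
    have hzx : (0:ℝ) < z - x := by linarith
    have hθ0 : 0 < (z - m) / (z - x) := by
      apply div_pos (by linarith) hzx
    have hθ1 : (z - m) / (z - x) < 1 := by
      rw [div_lt_one hzx]; linarith
    have hcv := hfun_convR hp hδ hφ0 hconv hθ0 hθ1 hfx hfz
    have harg : (z - m) / (z - x) * x + (1 - (z - m) / (z - x)) * z = m := by
      field_simp
      ring
    rw [harg, hfm] at hcv
    have hreal : hm ≤ (z - m) / (z - x) * hx + (1 - (z - m) / (z - x)) * hz :=
      EReal.coe_le_coe_iff.1 hcv
    have hexp : ((z - m) / (z - x) * hx + (1 - (z - m) / (z - x)) * hz) * (z - x)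
        = (z - m) * hx + (m - x) * hz := by
      field_simp
      try ring
    nlinarith [mul_le_mul_of_nonneg_right hreal hzx.le]
  have mid1 : ∀ x z hx hz : ℝ, x < 1 → 1 < z →
      hfun φ p f δ x ≤ (hx : EReal) → hfun φ p f δ z ≤ (hz : EReal) →
      v * (z - x) ≤ (z - 1) * hx + (1 - x) * hz := by
    intro x z hx hz hx1 h1z hfx hfz
    have := mid2 x z 1 hx hz v hx1 h1z hfx hfz hv
    linarith [this]
  have domUp : ∀ x z m hx hz : ℝ, x < m → m < z →
      hfun φ p f δ x ≤ (hx : EReal) → hfun φ p f δ z ≤ (hz : EReal) →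
      hfun φ p f δ m ≠ ⊤ := by
    intro x z m hx hz hxm hmz hfx hfz
    have hzx : (0:ℝ) < z - x := by linarith
    have hθ0 : 0 < (z - m) / (z - x) := div_pos (by linarith) hzx
    have hθ1 : (z - m) / (z - x) < 1 := by rw [div_lt_one hzx]; linarith
    have hcv := hfun_convR hp hδ hφ0 hconv hθ0 hθ1 hfx hfz
    have harg : (z - m) / (z - x) * x + (1 - (z - m) / (z - x)) * z = m := by
      field_simp
      ring
    rw [harg] at hcv
    exact (lt_of_le_of_lt hcv (EReal.coe_lt_top _)).ne
  rcases eq_or_ne (hfun φ p f δ a) ⊤ with hA | hA <;>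
    rcases eq_or_ne (hfun φ p f δ b) ⊤ with hB | hB
  · -- case 1 : both ⊤
    refine ⟨0, fun s => ?_⟩
    rcases eq_or_ne (hfun φ p f δ s) ⊤ with hS | hS
    · rw [hS]; exact le_top
    · have hsa : a < s := by
        by_contra hc
        push_neg at hc
        rcases eq_or_lt_of_le hc with rfl | hlt
        · exact hS hA
        · exact (domUp s 1 a ((hfun φ p f δ s).toReal) v hlt ha1
            (real_of s hS).le hv.le) hA
      have hsb : s < b := by
        by_contra hc
        push_neg at hc
        rcases eq_or_lt_of_le hc with h' | hlt
        · exact hS (h' ▸ hB)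
        · exact (domUp 1 s b v ((hfun φ p f δ s).toReal) h1b hlt hv.le
            (real_of s hS).le) hB
      refine le_trans ?_ (hwina s hsa.le hsb.le)
      apply EReal.coe_le_coe_iff.2
      linarith
  · -- case 2 in my plan's numbering is hA = ⊤, hB ≠ ⊤  (this branch: hA : =⊤, hB : ≠⊤)
    set hbv : ℝ := (hfun φ p f δ b).toReal with hbvdef
    have hbeq : hfun φ p f δ b = (hbv : EReal) := real_of b hB
    set μ : ℝ := (hbv - v) / (b - 1) with hμ
    have hb1 : (0:ℝ) < b - 1 := by linarith
    -- chord left : ∀ s < 1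
    have CL : ∀ s : ℝ, s < 1 → ((v + μ * (s - 1) : ℝ) : EReal) ≤ hfun φ p f δ s := by
      intro s hs1
      rcases eq_or_ne (hfun φ p f δ s) ⊤ with hS | hS
      · rw [hS]; exact le_top
      · set hsv : ℝ := (hfun φ p f δ s).toReal
        have hseq : hfun φ p f δ s = (hsv : EReal) := real_of s hS
        have hmid := mid1 s b hsv hbv hs1 h1b hseq.le hbeq.le
        rw [hseq]
        apply EReal.coe_le_coe_iff.2
        rw [← sub_nonneg]
        have hexp : hsv - (v + μ * (s - 1))
            = ((b - 1) * hsv - ((b - 1) * v + (hbv - v) * (s - 1))) / (b - 1) := by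
          rw [hμ]; field_simp
        rw [hexp]
        apply div_nonneg _ hb1.le
        nlinarith [hmid]
    -- chord right : ∀ s > b
    have CR : ∀ s : ℝ, b < s → ((v + μ * (s - 1) : ℝ) : EReal) ≤ hfun φ p f δ s := by
      intro s hbs
      rcases eq_or_ne (hfun φ p f δ s) ⊤ with hS | hS
      · rw [hS]; exact le_top
      · set hsv : ℝ := (hfun φ p f δ s).toReal
        have hseq : hfun φ p f δ s = (hsv : EReal) := real_of s hS
        have hmid := mid2 1 s b v hsv hbv h1b hbs hv.le hseq.le hbeq
        rw [hseq]
        apply EReal.coe_le_coe_iff.2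
        rw [← sub_nonneg]
        have hexp : hsv - (v + μ * (s - 1))
            = ((b - 1) * hsv - ((b - 1) * v + (hbv - v) * (s - 1))) / (b - 1) := by
          rw [hμ]; field_simp
        rw [hexp]
        apply div_nonneg _ hb1.le
        nlinarith [hmid]
    rcases le_or_gt μ 0 with hμ0 | hμ0
    · refine ⟨μ, fun s => ?_⟩
      rcases lt_trichotomy s 1 with hs | hs | hs
      · exact le_trans (EReal.coe_le_coe_iff.2 (by nlinarith : r + μ * (s - 1) ≤ v + μ * (s - 1)))
          (CL s hs)
      · rw [hs, hv]
        apply EReal.coe_le_coe_iff.2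
        simp
        linarith
      · rcases le_or_gt s b with hsb | hsb
        · refine le_trans ?_ (hwina s (by linarith [ha1]) hsb)
          apply EReal.coe_le_coe_iff.2
          nlinarith
        · exact le_trans (EReal.coe_le_coe_iff.2
            (by nlinarith : r + μ * (s - 1) ≤ v + μ * (s - 1))) (CR s hsb)
    · refine ⟨0, fun s => ?_⟩
      have hg : ∀ s' : ℝ, (r : EReal) ≤ hfun φ p f δ s' →
          ((r + 0 * (s' - 1) : ℝ) : EReal) ≤ hfun φ p f δ s' := by
        intro s' h'
        simpa using h'
      apply hg
      rcases le_or_gt s a with hsa | hsa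
      · rcases eq_or_lt_of_le hsa with rfl | hlt
        · rw [hA]; exact le_top
        · rcases eq_or_ne (hfun φ p f δ s) ⊤ with hS | hS
          · rw [hS]; exact le_top
          · exact absurd (domUp s 1 a ((hfun φ p f δ s).toReal) v hlt ha1
              (real_of s hS).le hv.le) (fun h => h hA)
      · rcases le_or_gt s b with hsb | hsb
        · exact le_trans (EReal.coe_le_coe_iff.2 hrrr.le) (hwina s hsa.le hsb)
        · refine le_trans ?_ (CR s hsb)
          apply EReal.coe_le_coe_iff.2
          nlinarith
  · -- case 3 : hA ≠ ⊤, hB = ⊤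
    set hav : ℝ := (hfun φ p f δ a).toReal with havdef
    have haeq : hfun φ p f δ a = (hav : EReal) := real_of a hA
    set μ : ℝ := (v - hav) / (1 - a) with hμ
    have ha1' : (0:ℝ) < 1 - a := by linarith
    have CL : ∀ s : ℝ, s < a → ((v + μ * (s - 1) : ℝ) : EReal) ≤ hfun φ p f δ s := by
      intro s hsa
      rcases eq_or_ne (hfun φ p f δ s) ⊤ with hS | hS
      · rw [hS]; exact le_top
      · set hsv : ℝ := (hfun φ p f δ s).toReal
        have hseq : hfun φ p f δ s = (hsv : EReal) := real_of s hS
        have hmid := mid2 s 1 a hsv v hav hsa ha1 hseq.le hv.le haeq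
        rw [hseq]
        apply EReal.coe_le_coe_iff.2
        rw [← sub_nonneg]
        have hexp : hsv - (v + μ * (s - 1))
            = ((1 - a) * hsv - ((1 - a) * v + (v - hav) * (s - 1))) / (1 - a) := by
          rw [hμ]; field_simp
        rw [hexp]
        apply div_nonneg _ ha1'.le
        nlinarith [hmid]
    have CR : ∀ s : ℝ, 1 < s → ((v + μ * (s - 1) : ℝ) : EReal) ≤ hfun φ p f δ s := by
      intro s h1s
      rcases eq_or_ne (hfun φ p f δ s) ⊤ with hS | hS
      · rw [hS]; exact le_top
      · set hsv : ℝ := (hfun φ p f δ s).toReal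
        have hseq : hfun φ p f δ s = (hsv : EReal) := real_of s hS
        have hmid := mid1 a s hav hsv ha1 h1s haeq.le hseq.le
        rw [hseq]
        apply EReal.coe_le_coe_iff.2
        rw [← sub_nonneg]
        have hexp : hsv - (v + μ * (s - 1))
            = ((1 - a) * hsv - ((1 - a) * v + (v - hav) * (s - 1))) / (1 - a) := by
          rw [hμ]; field_simp
        rw [hexp]
        apply div_nonneg _ ha1'.le
        nlinarith [hmid]
    rcases le_or_gt μ 0 with hμ0 | hμ0
    · refine ⟨0, fun s => ?_⟩
      have hg : (r : EReal) ≤ hfun φ p f δ s →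
          ((r + 0 * (s - 1) : ℝ) : EReal) ≤ hfun φ p f δ s := by
        intro h'
        simpa using h'
      apply hg
      rcases lt_or_ge s a with hsa | hsa
      · refine le_trans ?_ (CL s hsa)
        apply EReal.coe_le_coe_iff.2
        nlinarith
      · rcases le_or_gt s b with hsb | hsb
        · exact le_trans (EReal.coe_le_coe_iff.2 hrrr.le) (hwina s hsa hsb)
        · rcases eq_or_ne (hfun φ p f δ s) ⊤ with hS | hS
          · rw [hS]; exact le_top
          · exact absurd (domUp 1 s b v ((hfun φ p f δ s).toReal) h1b hsb hv.le
              (real_of s hS).le) (fun h => h hB)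
    · refine ⟨μ, fun s => ?_⟩
      rcases lt_trichotomy s 1 with hs | hs | hs
      · rcases lt_or_ge s a with hsa | hsa
        · exact le_trans (EReal.coe_le_coe_iff.2
            (by nlinarith : r + μ * (s - 1) ≤ v + μ * (s - 1))) (CL s hsa)
        · refine le_trans ?_ (hwina s hsa (by linarith [h1b]))
          apply EReal.coe_le_coe_iff.2
          nlinarith
      · rw [hs, hv]
        apply EReal.coe_le_coe_iff.2
        simp
        linarith
      · exact le_trans (EReal.coe_le_coe_iff.2
          (by nlinarith : r + μ * (s - 1) ≤ v + μ * (s - 1))) (CR s hs)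
  · -- case 4 : both finite
    set hav : ℝ := (hfun φ p f δ a).toReal with havdef
    have haeq : hfun φ p f δ a = (hav : EReal) := real_of a hA
    set hbv : ℝ := (hfun φ p f δ b).toReal with hbvdef
    have hbeq : hfun φ p f δ b = (hbv : EReal) := real_of b hB
    have hb1 : (0:ℝ) < b - 1 := by linarith
    set T : Set ℝ := {x | ∃ s : ℝ, s < 1 ∧ ∃ hs : ℝ, hfun φ p f δ s = (hs : EReal)
      ∧ x = (v - hs) / (1 - s)} with hT
    have hTne : T.Nonempty := ⟨(v - hav) / (1 - a), a, ha1, hav, haeq, rfl⟩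
    have hTbdd : BddAbove T := by
      refine ⟨(hbv - v) / (b - 1), ?_⟩
      rintro x ⟨s, hs1, hs, hfs, rfl⟩
      have hmid := mid1 s b hs hbv hs1 h1b hfs.le hbeq.le
      rw [div_le_div_iff₀ (by linarith : (0:ℝ) < 1 - s) hb1]
      nlinarith
    set lam : ℝ := sSup T with hlam
    refine ⟨lam, fun s => ?_⟩
    rcases lt_trichotomy s 1 with hs | hs | hs
    · rcases eq_or_ne (hfun φ p f δ s) ⊤ with hS | hS
      · rw [hS]; exact le_top
      · set hsv : ℝ := (hfun φ p f δ s).toReal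
        have hseq : hfun φ p f δ s = (hsv : EReal) := real_of s hS
        have hmem : (v - hsv) / (1 - s) ∈ T := ⟨s, hs, hsv, hseq, rfl⟩
        have hle : (v - hsv) / (1 - s) ≤ lam := le_csSup hTbdd hmem
        rw [div_le_iff₀ (by linarith : (0:ℝ) < 1 - s)] at hle
        rw [hseq]
        apply EReal.coe_le_coe_iff.2
        nlinarith
    · rw [hs, hv]
      apply EReal.coe_le_coe_iff.2
      simp
      linarith
    · rcases eq_or_ne (hfun φ p f δ s) ⊤ with hS | hS
      · rw [hS]; exact le_top
      · set hsv : ℝ := (hfun φ p f δ s).toReal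
        have hseq : hfun φ p f δ s = (hsv : EReal) := real_of s hS
        have hle : lam ≤ (hsv - v) / (s - 1) := by
          apply csSup_le hTne
          rintro x ⟨t, ht1, ht, hft, rfl⟩
          have hmid := mid1 t s ht hsv ht1 hs hft.le hseq.le
          rw [div_le_div_iff₀ (by linarith : (0:ℝ) < 1 - t) (by linarith : (0:ℝ) < s - 1)]
          nlinarith
        rw [le_div_iff₀ (by linarith : (0:ℝ) < s - 1)] at hle
        rw [hseq]
        apply EReal.coe_le_coe_iff.2
        nlinarith

set_option maxHeartbeats 1600000 in
include hp hδ hφ0 in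
lemma dual_ge (hps : ∑ i, p i = 1) (hone : φ 1 = 0) (hneg : ∀ z : ℝ, z < 0 → φ z = ⊤)
    {r lam : ℝ} (H : ∀ s : ℝ, ((r + lam * (s - 1) : ℝ) : EReal) ≤ hfun φ p f δ s) :
    (r : EReal) ≤ ⨆ c : ℝ,
      ((-(1 / δ) : ℝ) : EReal) * (∑ i, ((p i : ℝ) : EReal) * phiStar φ (-δ * (f i + c)))
        - (c : EReal) := by
  set c : ℝ := -lam with hc
  set ζ : Fin n → ℝ := fun i => -δ * (f i + c) with hζ
  have hstar_lb : ∀ w : ℝ, ((w : ℝ) : EReal) ≤ phiStar φ w := by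
    intro w
    have h1 : ((w * 1 : ℝ) : EReal) - φ 1 ≤ phiStar φ w :=
      le_iSup (fun z : ℝ => ((w * z : ℝ) : EReal) - φ z) 1
    rw [hone] at h1
    simpa using h1
  have key : ∀ t : Fin n → ℝ, (∀ i, ((t i : ℝ) : EReal) < phiStar φ (ζ i)) →
      ∑ i, p i * t i ≤ δ * (lam - r) := by
    intro t ht
    have hz : ∀ i, ∃ z : ℝ, ((t i : ℝ) : EReal) < ((ζ i * z : ℝ) : EReal) - φ z :=
      fun i => lt_iSup_iff.1 (ht i)
    choose z hzlt using hz
    have hφtop : ∀ i, φ (z i) ≠ ⊤ := by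
      intro i htop
      have := hzlt i
      rw [htop, EReal.sub_top] at this
      exact absurd this (by simp)
    have hφbot : ∀ i, φ (z i) ≠ ⊥ := fun i => ((EReal.bot_lt_coe 0).trans_le (hφ0 _)).ne'
    have hgeq : ∀ i, φ (z i) = (((φ (z i)).toReal : ℝ) : EReal) :=
      fun i => (EReal.coe_toReal (hφtop i) (hφbot i)).symm
    set g : Fin n → ℝ := fun i => (φ (z i)).toReal with hgdef
    have htg : ∀ i, t i < ζ i * z i - g i := by
      intro i
      have h2 := hzlt i
      rw [hgeq i, ← EReal.coe_sub] at h2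
      exact_mod_cast h2
    have hz0 : ∀ i, 0 ≤ z i := by
      intro i
      by_contra hzn
      push_neg at hzn
      exact hφtop i (hneg _ hzn)
    set q : Fin n → ℝ := fun i => p i * z i with hq
    have hfeas : q ∈ Feas n (∑ i, p i * z i) :=
      ⟨fun i => mul_nonneg (hp i).le (hz0 i), rfl⟩
    have hqz : ∀ i, q i / p i = z i := fun i => by
      rw [hq]
      exact mul_div_cancel_left₀ _ (hp i).ne'
    have hobjq : obj φ p f δ q = ((∑ i, q i * f i + (1 / δ) * ∑ i, p i * g i : ℝ) : EReal) :=
      obj_real q g (fun i => by rw [hqz i]; exact hgeq i)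
    have hreal : r + lam * (∑ i, p i * z i - 1)
        ≤ ∑ i, q i * f i + (1 / δ) * ∑ i, p i * g i := by
      have h3 := le_trans (H (∑ i, p i * z i)) ((hfun_le hfeas).trans_eq hobjq)
      exact_mod_cast h3
    have hsplit : ∀ i, p i * (ζ i * z i - g i)
        = -δ * (q i * f i) + δ * lam * (p i * z i) - p i * g i := by
      intro i
      rw [hζ, hq, hc]
      ring
    have hcalc : ∑ i, p i * (ζ i * z i - g i)
        = -δ * (∑ i, q i * f i) + δ * lam * (∑ i, p i * z i) - ∑ i, p i * g i := by
      rw [Finset.sum_congr rfl fun i _ => hsplit i]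
      rw [Finset.sum_sub_distrib, Finset.sum_add_distrib, ← Finset.mul_sum, ← Finset.mul_sum]
    have hle1 : ∑ i, p i * t i ≤ ∑ i, p i * (ζ i * z i - g i) :=
      Finset.sum_le_sum fun i _ => mul_le_mul_of_nonneg_left (htg i).le (hp i).le
    rw [hcalc] at hle1
    have h5 : δ * (1 / δ * ∑ i, p i * g i) = ∑ i, p i * g i := by
      field_simp
    nlinarith [mul_le_mul_of_nonneg_left hreal hδ.le, h5]
  -- Step B : the dual sum is bounded
  set S : EReal := ∑ i, ((p i : ℝ) : EReal) * phiStar φ (ζ i) with hS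
  have hterm_lb : ∀ i, ((p i * ζ i : ℝ) : EReal) ≤ ((p i : ℝ) : EReal) * phiStar φ (ζ i) :=
    fun i => by
      rw [EReal.coe_mul]
      exact mul_le_mul_of_nonneg_left (hstar_lb (ζ i)) (EReal.coe_nonneg.2 (hp i).le)
  have hterm_bot : ∀ i, ((p i : ℝ) : EReal) * phiStar φ (ζ i) ≠ ⊥ :=
    fun i => ((EReal.bot_lt_coe _).trans_le (hterm_lb i)).ne'
  have hSle : S ≤ ((δ * (lam - r) : ℝ) : EReal) := by
    rcases em (∃ j, phiStar φ (ζ j) = ⊤) with ⟨j, hj⟩ | hnt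
    · exfalso
      set M : ℝ := (δ * (lam - r) - ∑ i ∈ Finset.univ.erase j, p i * (ζ i - 1) + 1) / p j
        with hM
      set t : Fin n → ℝ := fun i => if i = j then M else ζ i - 1 with ht
      have htlt : ∀ i, ((t i : ℝ) : EReal) < phiStar φ (ζ i) := by
        intro i
        by_cases hij : i = j
        · rw [hij, hj]
          exact EReal.coe_lt_top _
        · rw [ht]
          simp only [if_neg hij]
          exact lt_of_lt_of_le (EReal.coe_lt_coe_iff.2 (by linarith)) (hstar_lb (ζ i))
      have hkey := key t htlt
      rw [← Finset.add_sum_erase _ _ (Finset.mem_univ j)] at hkey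
      have hterase : ∑ i ∈ Finset.univ.erase j, p i * t i
          = ∑ i ∈ Finset.univ.erase j, p i * (ζ i - 1) := by
        refine Finset.sum_congr rfl fun i hi => ?_
        rw [ht]
        simp only [if_neg (Finset.ne_of_mem_erase hi)]
      have htj : t j = M := by rw [ht]; simp
      have hpj : p j * M = δ * (lam - r) - ∑ i ∈ Finset.univ.erase j, p i * (ζ i - 1) + 1 := by
        rw [hM, mul_comm, div_mul_cancel₀ _ (hp j).ne']
      rw [hterase, htj, hpj] at hkey
      linarith
    · push_neg at hnt
      have hstar_bot : ∀ i, phiStar φ (ζ i) ≠ ⊥ :=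
        fun i => ((EReal.bot_lt_coe _).trans_le (hstar_lb (ζ i))).ne'
      have hTeq : ∀ i, phiStar φ (ζ i) = (((phiStar φ (ζ i)).toReal : ℝ) : EReal) :=
        fun i => (EReal.coe_toReal (hnt i) (hstar_bot i)).symm
      set T : Fin n → ℝ := fun i => (phiStar φ (ζ i)).toReal with hT
      have hSeq : S = ((∑ i, p i * T i : ℝ) : EReal) := by
        rw [hS, coe_sum]
        exact Finset.sum_congr rfl fun i _ => by rw [hTeq i, ← EReal.coe_mul]
      rw [hSeq]
      apply EReal.coe_le_coe_iff.2
      by_contra hcon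
      push_neg at hcon
      set ε : ℝ := ∑ i, p i * T i - δ * (lam - r) with hε
      have hε0 : 0 < ε := by rw [hε]; linarith
      have hlt : ∀ i, ((T i - ε / 2 : ℝ) : EReal) < phiStar φ (ζ i) := by
        intro i
        rw [hTeq i]
        exact EReal.coe_lt_coe_iff.2 (by linarith)
      have hkey := key _ hlt
      have hsum2 : ∑ i, p i * (T i - ε / 2) = ∑ i, p i * T i - ε / 2 := by
        have hterm : ∀ i : Fin n, p i * (T i - ε / 2) = p i * T i - ε / 2 * p i :=
          fun i => by ring
        rw [Finset.sum_congr rfl fun i _ => hterm i, Finset.sum_sub_distrib,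
          ← Finset.mul_sum, hps, mul_one]
      rw [hsum2] at hkey
      linarith
  -- Step C : conclude
  have hSbot : S ≠ ⊥ := by
    rw [hS]
    exact sum_ne_bot _ _ fun i _ => hterm_bot i
  have hStop : S ≠ ⊤ := (hSle.trans_lt (EReal.coe_lt_top _)).ne
  have hSeq2 : S = ((S.toReal : ℝ) : EReal) := (EReal.coe_toReal hStop hSbot).symm
  have hTle : S.toReal ≤ δ * (lam - r) := by
    rw [hSeq2] at hSle
    exact_mod_cast hSle
  have hGc : (r : EReal) ≤ ((-(1 / δ) : ℝ) : EReal) * S - (c : EReal) := by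
    rw [hSeq2, ← EReal.coe_mul, ← EReal.coe_sub]
    apply EReal.coe_le_coe_iff.2
    rw [hc]
    have h6 : 1 / δ * (δ * (lam - r)) = lam - r := by field_simp
    nlinarith [mul_le_mul_of_nonneg_left hTle (by positivity : (0:ℝ) ≤ 1 / δ), h6]
  exact le_trans hGc (le_iSup (fun c : ℝ =>
    ((-(1 / δ) : ℝ) : EReal) * (∑ i, ((p i : ℝ) : EReal) * phiStar φ (-δ * (f i + c)))
      - (c : EReal)) c)


set_option maxHeartbeats 1600000 in
include hp hδ hφ0 in
lemma weak_dual {q : Fin n → ℝ} (hq0 : ∀ i, 0 ≤ q i) (hq1 : ∑ i, q i = 1) (c : ℝ) :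
    ((-(1 / δ) : ℝ) : EReal) * (∑ i, ((p i : ℝ) : EReal) * phiStar φ (-δ * (f i + c)))
      - (c : EReal) ≤ obj φ p f δ q := by
  set ζ : Fin n → ℝ := fun i => -δ * (f i + c) with hζ
  have hδδ : (0:ℝ) < 1 / δ := by positivity
  rcases eq_or_ne (∑ i, ((p i : ℝ) : EReal) * φ (q i / p i)) ⊤ with hBtop | hBtop
  · have hO : obj φ p f δ q = ⊤ := by
      rw [obj, hBtop, EReal.mul_top_of_pos (EReal.coe_pos.2 hδδ), EReal.coe_add_top]
    rw [hO]
    exact le_top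
  · have hterm : ∀ i, ((p i : ℝ) : EReal) * φ (q i / p i) ≠ ⊤ := by
      intro i hi
      exact hBtop (sum_eq_top _ _ (Finset.mem_univ i) hi
        (fun j _ => ((EReal.bot_lt_coe 0).trans_le
          (mul_nonneg (EReal.coe_nonneg.2 (hp j).le) (hφ0 _))).ne'))
    have hφtop : ∀ i, φ (q i / p i) ≠ ⊤ := by
      intro i hi
      exact hterm i (by rw [hi, EReal.coe_mul_top_of_pos (hp i)])
    have hφbot : ∀ i, φ (q i / p i) ≠ ⊥ := fun i => ((EReal.bot_lt_coe 0).trans_le (hφ0 _)).ne'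
    have hgeq : ∀ i, φ (q i / p i) = (((φ (q i / p i)).toReal : ℝ) : EReal) :=
      fun i => (EReal.coe_toReal (hφtop i) (hφbot i)).symm
    set g : Fin n → ℝ := fun i => (φ (q i / p i)).toReal with hgdef
    have hobjq : obj φ p f δ q = ((∑ i, q i * f i + (1 / δ) * ∑ i, p i * g i : ℝ) : EReal) :=
      obj_real q g hgeq
    have hstar2 : ∀ i, ((ζ i * (q i / p i) - g i : ℝ) : EReal) ≤ phiStar φ (ζ i) := by
      intro i
      have h1 : ((ζ i * (q i / p i) : ℝ) : EReal) - φ (q i / p i) ≤ phiStar φ (ζ i) :=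
        le_iSup (fun z : ℝ => ((ζ i * z : ℝ) : EReal) - φ z) (q i / p i)
      rw [hgeq i, ← EReal.coe_sub] at h1
      exact h1
    have hterm_lb : ∀ i, ((p i * (ζ i * (q i / p i) - g i) : ℝ) : EReal)
        ≤ ((p i : ℝ) : EReal) * phiStar φ (ζ i) := fun i => by
      rw [EReal.coe_mul]
      exact mul_le_mul_of_nonneg_left (hstar2 i) (EReal.coe_nonneg.2 (hp i).le)
    have hterm_bot : ∀ i, ((p i : ℝ) : EReal) * phiStar φ (ζ i) ≠ ⊥ :=
      fun i => ((EReal.bot_lt_coe _).trans_le (hterm_lb i)).ne'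
    rcases em (∃ j, phiStar φ (ζ j) = ⊤) with ⟨j, hj⟩ | hnt
    · have hsum_top : ∑ i, ((p i : ℝ) : EReal) * phiStar φ (ζ i) = ⊤ :=
        sum_eq_top _ _ (Finset.mem_univ j)
          (by rw [hj, EReal.coe_mul_top_of_pos (hp j)]) (fun i _ => hterm_bot i)
      rw [hsum_top, EReal.coe_mul_top_of_neg (by linarith : -(1 / δ) < 0), EReal.bot_sub]
      exact bot_le
    · push_neg at hnt
      have hstar_bot : ∀ i, phiStar φ (ζ i) ≠ ⊥ :=
        fun i => ((EReal.bot_lt_coe _).trans_le (hstar2 i)).ne'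
      have hTeq : ∀ i, phiStar φ (ζ i) = (((phiStar φ (ζ i)).toReal : ℝ) : EReal) :=
        fun i => (EReal.coe_toReal (hnt i) (hstar_bot i)).symm
      set T : Fin n → ℝ := fun i => (phiStar φ (ζ i)).toReal with hT
      have hTge : ∀ i, ζ i * (q i / p i) - g i ≤ T i := by
        intro i
        have h2 := hstar2 i
        rw [hTeq i] at h2
        exact_mod_cast h2
      have hsum_eq : ∑ i, ((p i : ℝ) : EReal) * phiStar φ (ζ i)
          = ((∑ i, p i * T i : ℝ) : EReal) := by
        rw [coe_sum]
        exact Finset.sum_congr rfl fun i _ => by rw [hTeq i, ← EReal.coe_mul]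
      rw [hsum_eq, hobjq, ← EReal.coe_mul, ← EReal.coe_sub]
      apply EReal.coe_le_coe_iff.2
      have hsplit : ∀ i, p i * (ζ i * (q i / p i) - g i)
          = -δ * (q i * f i) + (-δ * c) * q i - p i * g i := by
        intro i
        have hpne := (hp i).ne'
        rw [hζ]
        field_simp
        ring
      have hcalc : ∑ i, p i * (ζ i * (q i / p i) - g i)
          = -δ * (∑ i, q i * f i) + (-δ * c) - ∑ i, p i * g i := by
        rw [Finset.sum_congr rfl fun i _ => hsplit i]
        rw [Finset.sum_sub_distrib, Finset.sum_add_distrib, ← Finset.mul_sum, ← Finset.mul_sum,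
          hq1, mul_one]
      have hlow : ∑ i, p i * (ζ i * (q i / p i) - g i) ≤ ∑ i, p i * T i :=
        Finset.sum_le_sum fun i _ => mul_le_mul_of_nonneg_left (hTge i) (hp i).le
      rw [hcalc] at hlow
      have G2 : -(∑ i, p i * T i) - δ * c ≤ δ * (∑ i, q i * f i) + ∑ i, p i * g i := by
        linarith
      have e1 : -(1 / δ) * (∑ i, p i * T i) - c = 1 / δ * (-(∑ i, p i * T i) - δ * c) := by
        field_simp
        try ring
      have e2 : ∑ i, q i * f i + 1 / δ * ∑ i, p i * g i
          = 1 / δ * (δ * (∑ i, q i * f i) + ∑ i, p i * g i) := by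
        field_simp
        try ring
      rw [e1, e2]
      exact mul_le_mul_of_nonneg_left G2 hδδ.le


end Ctx

end DROaux

/-- Dual characterization of the empirical DRO problem (Proposition 2.1):
for `δ > 0`, the minimum over probability vectors `q` of
`Σ q_i f_i + (1/δ) Σ p_i φ(q_i/p_i)` equals the supremum over `c ∈ ℝ` of
`−(1/δ) Σ p_i φ*(−δ(f_i + c)) − c`, both sides in the extended reals. -/
theorem empirical_dro_duality
    (φ : ℝ → EReal)
    (hconv : ∀ x y a b : ℝ, 0 ≤ a → 0 ≤ b → a + b = 1 →
      φ (a * x + b * y) ≤ (a : EReal) * φ x + (b : EReal) * φ y)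
    (hlsc : LowerSemicontinuous φ)
    (hnonneg : ∀ z : ℝ, 0 ≤ z → 0 ≤ φ z)
    (hone : φ 1 = 0)
    (hneg : ∀ z : ℝ, z < 0 → φ z = ⊤)
    (n : ℕ) (hn : 1 ≤ n)
    (p : Fin n → ℝ) (hp : ∀ i, 0 < p i) (hps : ∑ i, p i = 1)
    (f : Fin n → ℝ) (δ : ℝ) (hδ : 0 < δ) :
    (⨅ q : {q : Fin n → ℝ // (∀ i, 0 ≤ q i) ∧ ∑ i, q i = 1},
        ((∑ i, q.1 i * f i : ℝ) : EReal)
          + ((1 / δ : ℝ) : EReal) * ∑ i, ((p i : ℝ) : EReal) * φ (q.1 i / p i))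
      = ⨆ c : ℝ,
        ((-(1 / δ) : ℝ) : EReal) * (∑ i, ((p i : ℝ) : EReal) * phiStar φ (-δ * (f i + c)))
          - (c : EReal) := by
  classical
  have hφ0 : ∀ z : ℝ, 0 ≤ φ z := by
    intro z
    rcases lt_or_ge z 0 with h | h
    · rw [hneg z h]
      exact le_top
    · exact hnonneg z h
  have hLHS : (⨅ q : {q : Fin n → ℝ // (∀ i, 0 ≤ q i) ∧ ∑ i, q i = 1},
        ((∑ i, q.1 i * f i : ℝ) : EReal)
          + ((1 / δ : ℝ) : EReal) * ∑ i, ((p i : ℝ) : EReal) * φ (q.1 i / p i))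
      = DROaux.hfun φ p f δ 1 := by
    rw [DROaux.hfun, sInf_image']
    rfl
  have hp_feas : p ∈ DROaux.Feas n 1 := ⟨fun i => (hp i).le, hps⟩
  have hobjp : DROaux.obj φ p f δ p
      = ((∑ i, p i * f i + (1 / δ) * ∑ i, p i * 0 : ℝ) : EReal) := by
    refine DROaux.obj_real p (fun _ => 0) fun i => ?_
    rw [div_self (hp i).ne', hone]
    norm_num
  have hEtop : DROaux.hfun φ p f δ 1 ≠ ⊤ :=
    (((DROaux.hfun_le hp_feas).trans_eq hobjp).trans_lt (EReal.coe_lt_top _)).ne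
  have hEbot : DROaux.hfun φ p f δ 1 ≠ ⊥ := DROaux.hfun_ne_bot hp hδ hφ0 1
  set v : ℝ := (DROaux.hfun φ p f δ 1).toReal with hvdef
  have hv1 : DROaux.hfun φ p f δ 1 = (v : EReal) := (EReal.coe_toReal hEtop hEbot).symm
  rw [hLHS]
  apply le_antisymm
  · rw [hv1]
    apply DROaux.le_of_forall_lt_coe
    intro r hrv
    have hr1 : (r : EReal) < DROaux.hfun φ p f δ 1 := by rw [hv1]; exact hrv
    obtain ⟨lam, Hlam⟩ := DROaux.claim_minorant hp hδ hφ0 hconv hlsc hr1 ⟨v, hv1⟩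
    exact DROaux.dual_ge hp hδ hφ0 hps hone hneg Hlam
  · apply iSup_le
    intro c
    rw [DROaux.hfun]
    apply le_sInf
    rintro y ⟨q, ⟨hq0, hq1⟩, rfl⟩
    exact DROaux.weak_dual hp hδ hφ0 hq0 hq1 c
end

section
/- Dual characterization of empirical DOO (Proposition 2.2). Let δ < 0, let n ≥ 1, let p = (p_1, …, p_n) be a probability vector with p_i > 0 for all i, and let f_1, …, f_n be real numbers. Then the maximum over all probability vectors q = (q_1, …, q_n) (q_i ≥ 0, Σ_i q_i = 1) of Σ_i q_i f_i + (1/δ) Σ_i p_i φ(q_i/p_i) equals the infimum over c ∈ ℝ of −(1/δ) Σ_i p_i φ*(−δ(f_i + c)) − c, where both sides are interpreted as elements of the extended reals. -/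
open scoped BigOperators

private lemma coe_sum' {n : ℕ} (g : Fin n → ℝ) :
    ((∑ i, g i : ℝ) : EReal) = ∑ i, ((g i : ℝ) : EReal) :=
  map_sum (⟨⟨(↑· : ℝ → EReal), EReal.coe_zero⟩, EReal.coe_add⟩ : ℝ →+ EReal) g Finset.univ

private lemma sum_ite_fin {n : ℕ} (i : Fin n) (v : ℝ) (g : Fin n → ℝ) :
    ∑ j, (if j = i then v else g j) = v + (∑ j, g j - g i) := by
  have h : ∀ j, (if j = i then v else g j) = Function.update g i v j := by
    intro j; rw [Function.update_apply]
  rw [Finset.sum_congr rfl fun j _ => h j, Finset.sum_update_of_mem (Finset.mem_univ i)]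
  congr 1
  rw [Finset.sum_sdiff_eq_sub (Finset.singleton_subset_iff.2 (Finset.mem_univ i)),
    Finset.sum_singleton]

section DOO

variable {n : ℕ} (φ : ℝ → EReal) (p f : Fin n → ℝ) (δ : ℝ)

/-- The primal objective. -/
noncomputable def Fq (q : Fin n → ℝ) : EReal :=
  ((∑ i, q i * f i : ℝ) : EReal)
    + ((1 / δ : ℝ) : EReal) * ∑ i, ((p i : ℝ) : EReal) * φ (q i / p i)

/-- The realized hypograph of the value function of the primal problem. -/
def Aset : Set (ℝ × ℝ) :=
  {x | ∃ q ψ : Fin n → ℝ, (∀ i, 0 ≤ q i) ∧ (∀ i, φ (q i / p i) = ((ψ i : ℝ) : EReal))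
    ∧ x.1 = ∑ i, q i ∧ x.2 ≤ ∑ i, q i * f i + 1 / δ * ∑ i, p i * ψ i}

variable {φ p f δ}

lemma Fq_real (q ψ : Fin n → ℝ) (hψ : ∀ i, φ (q i / p i) = ((ψ i : ℝ) : EReal)) :
    Fq φ p f δ q = ((∑ i, q i * f i + 1 / δ * ∑ i, p i * ψ i : ℝ) : EReal) := by
  unfold Fq
  have h1 : ∀ i, ((p i : ℝ) : EReal) * φ (q i / p i) = ((p i * ψ i : ℝ) : EReal) := by
    intro i; rw [hψ i, ← EReal.coe_mul]
  rw [Finset.sum_congr rfl fun i _ => h1 i, ← coe_sum', ← EReal.coe_mul, ← EReal.coe_add]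

lemma Fq_cases (hδ : δ < 0) (hp : ∀ i, 0 < p i) (hφ0 : ∀ z : ℝ, 0 ≤ φ z)
    (q : Fin n → ℝ) :
    Fq φ p f δ q = ⊥ ∨ ∃ ψ : Fin n → ℝ, (∀ i, 0 ≤ ψ i)
      ∧ (∀ i, φ (q i / p i) = ((ψ i : ℝ) : EReal))
      ∧ Fq φ p f δ q = ((∑ i, q i * f i + 1 / δ * ∑ i, p i * ψ i : ℝ) : EReal) := by
  by_cases htop : ∃ i, φ (q i / p i) = ⊤
  · left
    obtain ⟨i, hi⟩ := htop
    have hterm : ((p i : ℝ) : EReal) * φ (q i / p i) = ⊤ := by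
      rw [hi]; exact EReal.coe_mul_top_of_pos (hp i)
    have hsum : ∑ j, ((p j : ℝ) : EReal) * φ (q j / p j) = ⊤ := by
      refine top_le_iff.1 ?_
      calc (⊤ : EReal) = ((p i : ℝ) : EReal) * φ (q i / p i) := hterm.symm
        _ ≤ ∑ j, ((p j : ℝ) : EReal) * φ (q j / p j) :=
          Finset.single_le_sum
            (f := fun j => ((p j : ℝ) : EReal) * φ (q j / p j))
            (fun j _ => mul_nonneg (by exact_mod_cast (hp j).le) (hφ0 _))
            (Finset.mem_univ i)
    unfold Fq
    rw [hsum, EReal.coe_mul_top_of_neg (by apply div_neg_of_pos_of_neg one_pos hδ)]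
    simp
  · right
    push_neg at htop
    have hne : ∀ i, ∃ r : ℝ, 0 ≤ r ∧ φ (q i / p i) = (r : EReal) := by
      intro i
      have hb : φ (q i / p i) ≠ ⊥ := ne_of_gt (lt_of_lt_of_le (by simp) (hφ0 _))
      refine ⟨(φ (q i / p i)).toReal, ?_, (EReal.coe_toReal (htop i) hb).symm⟩
      have := hφ0 (q i / p i)
      rw [← EReal.coe_toReal (htop i) hb] at this
      exact_mod_cast this
    choose ψ hψ0 hψ using hne
    exact ⟨ψ, hψ0, hψ, Fq_real q ψ hψ⟩

lemma Aset_convex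
    (hconv : ∀ x y a b : ℝ, 0 ≤ a → 0 ≤ b → a + b = 1 →
      φ (a * x + b * y) ≤ (a : EReal) * φ x + (b : EReal) * φ y)
    (hnonneg : ∀ z : ℝ, 0 ≤ φ z)
    (hδ : δ < 0) (hp : ∀ i, 0 < p i) :
    Convex ℝ (Aset φ p f δ) := by
  rintro ⟨t, r⟩ ⟨q, ψ, hq0, hψ, ht, hr⟩ ⟨t', r'⟩ ⟨q', ψ', hq0', hψ', ht', hr'⟩ a b ha hb hab
  have hδ' : 1 / δ < 0 := div_neg_of_pos_of_neg one_pos hδ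
  set q'' : Fin n → ℝ := fun i => a * q i + b * q' i with hq''
  have hχle : ∀ i, φ (q'' i / p i) ≤ (((a * ψ i + b * ψ' i : ℝ)) : EReal) := by
    intro i
    have hdiv : q'' i / p i = a * (q i / p i) + b * (q' i / p i) := by
      field_simp [hq'']
      rfl
    calc φ (q'' i / p i) ≤ (a : EReal) * φ (q i / p i) + (b : EReal) * φ (q' i / p i) := by
          rw [hdiv]; exact hconv _ _ a b ha hb hab
      _ = (((a * ψ i + b * ψ' i : ℝ)) : EReal) := by
          rw [hψ i, hψ' i, ← EReal.coe_mul, ← EReal.coe_mul, ← EReal.coe_add]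
  set χ : Fin n → ℝ := fun i => (φ (q'' i / p i)).toReal with hχ
  have hχeq : ∀ i, φ (q'' i / p i) = ((χ i : ℝ) : EReal) := by
    intro i
    refine (EReal.coe_toReal ?_ ?_).symm
    · exact ne_top_of_le_ne_top (EReal.coe_ne_top _) (hχle i)
    · exact ne_of_gt (lt_of_lt_of_le (by simp) (hnonneg _))
  have hχle' : ∀ i, χ i ≤ a * ψ i + b * ψ' i := by
    intro i
    have := hχle i
    rw [hχeq i] at this
    exact_mod_cast this
  refine ⟨q'', χ, fun i => add_nonneg (mul_nonneg ha (hq0 i)) (mul_nonneg hb (hq0' i)),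
    hχeq, ?_, ?_⟩
  · show a * t + b * t' = ∑ i, q'' i
    simp only [hq'', Finset.sum_add_distrib, ← Finset.mul_sum]
    rw [← ht, ← ht']
  · show a * r + b * r' ≤ ∑ i, q'' i * f i + 1 / δ * ∑ i, p i * χ i
    have hs1 : ∑ i, q'' i * f i = a * ∑ i, q i * f i + b * ∑ i, q' i * f i := by
      simp [hq'', add_mul, Finset.sum_add_distrib, Finset.mul_sum, mul_assoc]
    have hs3 : ∑ i, p i * χ i ≤ a * ∑ i, p i * ψ i + b * ∑ i, p i * ψ' i := by
      calc ∑ i, p i * χ i ≤ ∑ i, p i * (a * ψ i + b * ψ' i) :=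
            Finset.sum_le_sum fun i _ => mul_le_mul_of_nonneg_left (hχle' i) (hp i).le
        _ = a * ∑ i, p i * ψ i + b * ∑ i, p i * ψ' i := by
            simp [mul_add, Finset.sum_add_distrib, Finset.mul_sum, mul_left_comm]
    have h4 : 1 / δ * (a * ∑ i, p i * ψ i + b * ∑ i, p i * ψ' i) ≤ 1 / δ * ∑ i, p i * χ i :=
      mul_le_mul_of_nonpos_left hs3 hδ'.le
    have har : a * r ≤ a * (∑ i, q i * f i + 1 / δ * ∑ i, p i * ψ i) :=
      mul_le_mul_of_nonneg_left hr ha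
    have hbr : b * r' ≤ b * (∑ i, q' i * f i + 1 / δ * ∑ i, p i * ψ' i) :=
      mul_le_mul_of_nonneg_left hr' hb
    rw [hs1]
    nlinarith [har, hbr, h4]

lemma Aset_closed (hlsc : LowerSemicontinuous φ) (hnonneg : ∀ z : ℝ, 0 ≤ φ z)
    (hδ : δ < 0) (hp : ∀ i, 0 < p i) :
    IsClosed (Aset φ p f δ) := by
  have hδ' : 1 / δ < 0 := div_neg_of_pos_of_neg one_pos hδ
  refine IsSeqClosed.isClosed ?_
  intro x L hxA hxL
  choose q ψ hq0 hψ ht hr using hxA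
  have hψ0 : ∀ k i, 0 ≤ ψ k i := by
    intro k i
    have := hnonneg (q k i / p i)
    rw [hψ k i] at this
    exact_mod_cast this
  have ht1 : Filter.Tendsto (fun k => (x k).1) Filter.atTop (nhds L.1) :=
    (continuous_fst.tendsto L).comp hxL
  have ht2 : Filter.Tendsto (fun k => (x k).2) Filter.atTop (nhds L.2) :=
    (continuous_snd.tendsto L).comp hxL
  obtain ⟨B1, hB1⟩ := ht1.bddAbove_range
  have hB1' : ∀ k, (x k).1 ≤ B1 := fun k => hB1 ⟨k, rfl⟩
  have hqB : ∀ k i, q k i ≤ B1 := by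
    intro k i
    calc q k i ≤ ∑ j, q k j := Finset.single_le_sum (fun j _ => hq0 k j) (Finset.mem_univ i)
      _ = (x k).1 := (ht k).symm
      _ ≤ B1 := hB1' k
  have hqmem : ∀ k, q k ∈ Set.Icc (0 : Fin n → ℝ) (fun _ => B1) := by
    intro k
    exact ⟨fun i => hq0 k i, fun i => hqB k i⟩
  obtain ⟨qZ, hqZmem, σ1, hσ1mono, hσ1t⟩ := isCompact_Icc.tendsto_subseq hqmem
  obtain ⟨B2, hB2⟩ := ht2.bddBelow_range
  have hB2' : ∀ k, B2 ≤ (x k).2 := fun k => hB2 ⟨k, rfl⟩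
  set Cf : ℝ := ∑ i, max B1 0 * |f i| with hCf
  have hqf : ∀ k, |∑ i, q k i * f i| ≤ Cf := by
    intro k
    calc |∑ i, q k i * f i| ≤ ∑ i, |q k i * f i| := Finset.abs_sum_le_sum_abs _ _
      _ ≤ Cf := Finset.sum_le_sum fun i _ => by
          rw [abs_mul, abs_of_nonneg (hq0 k i)]
          exact mul_le_mul_of_nonneg_right (le_max_of_le_left (hqB k i)) (abs_nonneg _)
  set C : ℝ := δ * B2 + (-δ) * Cf with hC
  have hSpψ : ∀ k, ∑ i, p i * ψ k i ≤ C := by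
    intro k
    have h1 : (x k).2 ≤ ∑ i, q k i * f i + 1 / δ * ∑ i, p i * ψ k i := hr k
    have h2 := hB2' k
    have h3 := (abs_le.1 (hqf k)).1
    have h4 := (abs_le.1 (hqf k)).2
    have hδne : δ ≠ 0 := hδ.ne
    have heq : δ * (∑ i, q k i * f i + 1 / δ * ∑ i, p i * ψ k i)
        = δ * (∑ i, q k i * f i) + ∑ i, p i * ψ k i := by field_simp
    have h5 := mul_le_mul_of_nonpos_left h1 hδ.le
    have h6 := mul_le_mul_of_nonpos_left h2 hδ.le
    have h7 : -δ * (∑ i, q k i * f i) ≤ -δ * Cf :=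
      mul_le_mul_of_nonneg_left h4 (by linarith)
    linarith
  have hψB : ∀ k i, ψ k i ≤ C / p i := by
    intro k i
    rw [le_div_iff₀ (hp i)]
    calc ψ k i * p i = p i * ψ k i := mul_comm _ _
      _ ≤ ∑ j, p j * ψ k j := Finset.single_le_sum
          (f := fun j => p j * ψ k j) (fun j _ => mul_nonneg (hp j).le (hψ0 k j))
          (Finset.mem_univ i)
      _ ≤ C := hSpψ k
  have hψmem : ∀ k, ψ (σ1 k) ∈ Set.Icc (0 : Fin n → ℝ) (fun i => C / p i) :=
    fun k => ⟨fun i => hψ0 _ i, fun i => hψB _ i⟩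
  obtain ⟨psiZ, _hpsiZmem, σ2, hσ2mono, hσ2t⟩ := isCompact_Icc.tendsto_subseq hψmem
  set σ : ℕ → ℕ := σ1 ∘ σ2 with hσ
  have hσmono : StrictMono σ := hσ1mono.comp hσ2mono
  have h_qt : Filter.Tendsto (fun k => q (σ k)) Filter.atTop (nhds qZ) :=
    hσ1t.comp hσ2mono.tendsto_atTop
  have h_ψt : Filter.Tendsto (fun k => ψ (σ k)) Filter.atTop (nhds psiZ) := hσ2t
  have h_qit : ∀ i, Filter.Tendsto (fun k => q (σ k) i) Filter.atTop (nhds (qZ i)) :=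
    fun i => (tendsto_pi_nhds.1 h_qt) i
  have h_ψit : ∀ i, Filter.Tendsto (fun k => ψ (σ k) i) Filter.atTop (nhds (psiZ i)) :=
    fun i => (tendsto_pi_nhds.1 h_ψt) i
  have h_x1t : Filter.Tendsto (fun k => (x (σ k)).1) Filter.atTop (nhds L.1) :=
    ht1.comp hσmono.tendsto_atTop
  have h_x2t : Filter.Tendsto (fun k => (x (σ k)).2) Filter.atTop (nhds L.2) :=
    ht2.comp hσmono.tendsto_atTop
  have hqZ0 : ∀ i, 0 ≤ qZ i := fun i => hqZmem.1 i
  have hL1 : L.1 = ∑ i, qZ i := by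
    have hsum : Filter.Tendsto (fun k => ∑ i, q (σ k) i) Filter.atTop (nhds (∑ i, qZ i)) :=
      tendsto_finset_sum _ fun i _ => h_qit i
    have : Filter.Tendsto (fun k => (x (σ k)).1) Filter.atTop (nhds (∑ i, qZ i)) := by
      simpa only [ht] using hsum
    exact tendsto_nhds_unique h_x1t this
  have hφle : ∀ i, φ (qZ i / p i) ≤ ((psiZ i : ℝ) : EReal) := by
    intro i
    by_contra hcon
    push_neg at hcon
    obtain ⟨y, hy1, hy2⟩ := EReal.lt_iff_exists_real_btwn.1 hcon
    have hzt : Filter.Tendsto (fun k => q (σ k) i / p i) Filter.atTop (nhds (qZ i / p i)) :=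
      (h_qit i).div_const (p i)
    have hev : ∀ᶠ k in Filter.atTop, ((y : ℝ) : EReal) < φ (q (σ k) i / p i) :=
      hzt.eventually (hlsc (qZ i / p i) _ hy2)
    have hev' : ∀ᶠ k in Filter.atTop, y ≤ ψ (σ k) i := by
      filter_upwards [hev] with k hk
      rw [hψ (σ k) i] at hk
      exact_mod_cast hk.le
    have hle : y ≤ psiZ i := ge_of_tendsto (h_ψit i) hev'
    have : (psiZ i : ℝ) < y := by exact_mod_cast hy1
    linarith
  set χ : Fin n → ℝ := fun i => (φ (qZ i / p i)).toReal with hχ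
  have hχeq : ∀ i, φ (qZ i / p i) = ((χ i : ℝ) : EReal) := by
    intro i
    refine (EReal.coe_toReal ?_ ?_).symm
    · exact ne_top_of_le_ne_top (EReal.coe_ne_top _) (hφle i)
    · exact ne_of_gt (lt_of_lt_of_le (by simp) (hnonneg _))
  have hχle : ∀ i, χ i ≤ psiZ i := by
    intro i
    have := hφle i
    rw [hχeq i] at this
    exact_mod_cast this
  have hL2 : L.2 ≤ ∑ i, qZ i * f i + 1 / δ * ∑ i, p i * χ i := by
    have hRHS : Filter.Tendsto
        (fun k => ∑ i, q (σ k) i * f i + 1 / δ * ∑ i, p i * ψ (σ k) i)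
        Filter.atTop (nhds (∑ i, qZ i * f i + 1 / δ * ∑ i, p i * psiZ i)) := by
      refine Filter.Tendsto.add ?_ (Filter.Tendsto.const_mul _ ?_)
      · exact tendsto_finset_sum _ fun i _ => (h_qit i).mul_const (f i)
      · exact tendsto_finset_sum _ fun i _ => (h_ψit i).const_mul (p i)
    have h1 : L.2 ≤ ∑ i, qZ i * f i + 1 / δ * ∑ i, p i * psiZ i :=
      le_of_tendsto_of_tendsto' h_x2t hRHS fun k => hr (σ k)
    have h2 : ∑ i, p i * χ i ≤ ∑ i, p i * psiZ i :=
      Finset.sum_le_sum fun i _ => mul_le_mul_of_nonneg_left (hχle i) (hp i).le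
    nlinarith [mul_le_mul_of_nonpos_left h2 hδ'.le]
  exact ⟨qZ, χ, hqZ0, hχeq, hL1, hL2⟩

end DOO

set_option maxHeartbeats 1000000

/-- Dual characterization of the empirical DOO problem (Proposition 2.2):
for `δ < 0`, the maximum over probability vectors `q` of
`Σ q_i f_i + (1/δ) Σ p_i φ(q_i/p_i)` equals the infimum over `c ∈ ℝ` of
`−(1/δ) Σ p_i φ*(−δ(f_i + c)) − c`, both sides in the extended reals. -/
theorem empirical_doo_duality
    (φ : ℝ → EReal)
    (hconv : ∀ x y a b : ℝ, 0 ≤ a → 0 ≤ b → a + b = 1 →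
      φ (a * x + b * y) ≤ (a : EReal) * φ x + (b : EReal) * φ y)
    (hlsc : LowerSemicontinuous φ)
    (hnonneg : ∀ z : ℝ, 0 ≤ z → 0 ≤ φ z)
    (hone : φ 1 = 0)
    (hneg : ∀ z : ℝ, z < 0 → φ z = ⊤)
    (n : ℕ) (hn : 1 ≤ n)
    (p : Fin n → ℝ) (hp : ∀ i, 0 < p i) (hps : ∑ i, p i = 1)
    (f : Fin n → ℝ) (δ : ℝ) (hδ : δ < 0) :
    (⨆ q : {q : Fin n → ℝ // (∀ i, 0 ≤ q i) ∧ ∑ i, q i = 1},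
        ((∑ i, q.1 i * f i : ℝ) : EReal)
          + ((1 / δ : ℝ) : EReal) * ∑ i, ((p i : ℝ) : EReal) * φ (q.1 i / p i))
      = ⨅ c : ℝ,
        ((-(1 / δ) : ℝ) : EReal) * (∑ i, ((p i : ℝ) : EReal) * phiStar φ (-δ * (f i + c)))
          - (c : EReal) := by
  classical
  have hδne : δ ≠ 0 := hδ.ne
  have hδ' : 1 / δ < 0 := div_neg_of_pos_of_neg one_pos hδ
  have hmδ : (0:ℝ) < -δ := by linarith
  have hφ0 : ∀ z : ℝ, 0 ≤ φ z := fun z =>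
    (le_or_gt 0 z).elim (hnonneg z) (fun h => (hneg z h) ▸ le_top)
  show (⨆ q : {q : Fin n → ℝ // (∀ i, 0 ≤ q i) ∧ ∑ i, q i = 1}, Fq φ p f δ q.1)
      = ⨅ c : ℝ,
        ((-(1 / δ) : ℝ) : EReal) * (∑ i, ((p i : ℝ) : EReal) * phiStar φ (-δ * (f i + c)))
          - (c : EReal)
  set g : ℝ → EReal := fun c =>
    ((-(1 / δ) : ℝ) : EReal) * (∑ i, ((p i : ℝ) : EReal) * phiStar φ (-δ * (f i + c)))
      - (c : EReal) with hgdef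
  set S : EReal := ⨆ q : {q : Fin n → ℝ // (∀ i, 0 ≤ q i) ∧ ∑ i, q i = 1}, Fq φ p f δ q.1
    with hSdef
  set m : ℝ := ∑ i, p i * f i with hm
  -- The point q = p is feasible with value m.
  have hψp : ∀ i, φ (p i / p i) = (((0:ℝ) : ℝ) : EReal) := by
    intro i; rw [div_self (hp i).ne', hone]; norm_num
  have hFqp : Fq φ p f δ p = ((m : ℝ) : EReal) := by
    rw [Fq_real p 0 hψp]
    norm_num
    exact hm.symm
  have hSlb : ((m : ℝ) : EReal) ≤ S := by
    rw [hSdef, ← hFqp]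
    exact le_iSup (fun q : {q : Fin n → ℝ // (∀ i, 0 ≤ q i) ∧ ∑ i, q i = 1} =>
      Fq φ p f δ q.1) ⟨p, fun i => (hp i).le, hps⟩
  set M : ℝ := ∑ i, |f i| with hM
  have hSub : S ≤ ((M : ℝ) : EReal) := by
    refine iSup_le fun q => ?_
    rcases Fq_cases hδ hp hφ0 q.1 with hbot | ⟨ψ, hψ0, hψ, heq⟩
    · rw [hbot]; exact bot_le
    · rw [heq]
      refine EReal.coe_le_coe_iff.2 ?_
      have hq1 : ∑ i, q.1 i = 1 := q.2.2
      have hqle1 : ∀ i, q.1 i ≤ 1 := by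
        intro i
        calc q.1 i ≤ ∑ j, q.1 j :=
              Finset.single_le_sum (fun j _ => q.2.1 j) (Finset.mem_univ i)
          _ = 1 := hq1
      have h1 : ∑ i, q.1 i * f i ≤ M := by
        refine Finset.sum_le_sum fun i _ => ?_
        calc q.1 i * f i ≤ q.1 i * |f i| :=
              mul_le_mul_of_nonneg_left (le_abs_self _) (q.2.1 i)
          _ ≤ 1 * |f i| := mul_le_mul_of_nonneg_right (hqle1 i) (abs_nonneg _)
          _ = |f i| := one_mul _
      have h2 : 0 ≤ ∑ i, p i * ψ i :=
        Finset.sum_nonneg fun i _ => mul_nonneg (hp i).le (hψ0 i)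
      nlinarith [mul_nonpos_of_nonpos_of_nonneg hδ'.le h2]
  have hSnetop : S ≠ ⊤ := ne_top_of_le_ne_top (EReal.coe_ne_top M) hSub
  have hSnebot : S ≠ ⊥ := fun h => by
    rw [h] at hSlb
    exact (EReal.coe_ne_bot m) (le_bot_iff.1 hSlb)
  set Sr : ℝ := S.toReal with hSrdef
  have hSr : S = ((Sr : ℝ) : EReal) := (EReal.coe_toReal hSnetop hSnebot).symm
  -- Weak duality.
  have hweak : ∀ c : ℝ, S ≤ g c := by
    intro c
    refine iSup_le fun q => ?_
    rcases Fq_cases hδ hp hφ0 q.1 with hbot | ⟨ψ, hψ0, hψ, heq⟩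
    · rw [hbot]; exact bot_le
    · rw [heq]
      have hq1 : ∑ i, q.1 i = 1 := q.2.2
      -- lower bound each conjugate by the value at z = q i / p i
      have hstar : ∀ i, ((p i * ((-δ * (f i + c)) * (q.1 i / p i) - ψ i) : ℝ) : EReal)
          ≤ ((p i : ℝ) : EReal) * phiStar φ (-δ * (f i + c)) := by
        intro i
        have h1 : (((-δ * (f i + c)) * (q.1 i / p i) - ψ i : ℝ) : EReal)
            ≤ phiStar φ (-δ * (f i + c)) := by
          have := le_iSup (fun z : ℝ => (((-δ * (f i + c)) * z : ℝ) : EReal) - φ z)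
            (q.1 i / p i)
          rw [hψ i, ← EReal.coe_sub] at this
          exact this
        calc ((p i * ((-δ * (f i + c)) * (q.1 i / p i) - ψ i) : ℝ) : EReal)
            = ((p i : ℝ) : EReal) * (((-δ * (f i + c)) * (q.1 i / p i) - ψ i : ℝ) : EReal) := by
              rw [← EReal.coe_mul]
          _ ≤ ((p i : ℝ) : EReal) * phiStar φ (-δ * (f i + c)) :=
              mul_le_mul_of_nonneg_left h1 (by exact_mod_cast (hp i).le)
      set W : ℝ := ∑ i, p i * ((-δ * (f i + c)) * (q.1 i / p i) - ψ i) with hWdef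
      have hT : ((W : ℝ) : EReal) ≤ ∑ i, ((p i : ℝ) : EReal) * phiStar φ (-δ * (f i + c)) := by
        rw [hWdef, coe_sum']
        exact Finset.sum_le_sum fun i _ => hstar i
      have hmul : ((-(1/δ) * W : ℝ) : EReal)
          ≤ ((-(1 / δ) : ℝ) : EReal) * ∑ i, ((p i : ℝ) : EReal) * phiStar φ (-δ * (f i + c)) := by
        rw [EReal.coe_mul]
        exact mul_le_mul_of_nonneg_left hT (by exact_mod_cast (by linarith : (0:ℝ) ≤ -(1/δ)))
      have hsub : ((-(1/δ) * W - c : ℝ) : EReal) ≤ g c := by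
        show ((-(1/δ) * W - c : ℝ) : EReal)
            ≤ ((-(1 / δ) : ℝ) : EReal)
              * (∑ i, ((p i : ℝ) : EReal) * phiStar φ (-δ * (f i + c))) - (c : EReal)
        rw [EReal.coe_sub, sub_eq_add_neg, sub_eq_add_neg]
        exact add_le_add_left hmul _
      refine le_trans ?_ hsub
      refine EReal.coe_le_coe_iff.2 ?_
      have hW : W = -δ * (∑ i, q.1 i * f i) - δ * c * (∑ i, q.1 i) - ∑ i, p i * ψ i := by
        rw [hWdef]
        have hterm : ∀ i, p i * ((-δ * (f i + c)) * (q.1 i / p i) - ψ i)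
            = -δ * (q.1 i * f i) - δ * c * q.1 i - p i * ψ i := by
          intro i
          have hpi := (hp i).ne'
          field_simp
          ring
        rw [Finset.sum_congr rfl fun i _ => hterm i]
        rw [Finset.sum_sub_distrib, Finset.sum_sub_distrib, ← Finset.mul_sum, ← Finset.mul_sum]
      rw [hW, hq1]
      have : -(1/δ) * (-δ * (∑ i, q.1 i * f i) - δ * c * 1 - ∑ i, p i * ψ i) - c
          = ∑ i, q.1 i * f i + 1 / δ * ∑ i, p i * ψ i := by
        field_simp
        ring
      linarith [this.ge]
  -- Strong duality.
  have hstrong : (⨅ c : ℝ, g c) ≤ S := by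
    refine le_of_not_gt fun hlt => ?_
    rw [hSr] at hlt
    obtain ⟨u0, hu1, hu2⟩ := EReal.lt_iff_exists_real_btwn.1 hlt
    have hu1' : Sr < u0 := by exact_mod_cast hu1
    set ε : ℝ := u0 - Sr with hεdef
    have hε : 0 < ε := by linarith
    -- the key claim: the infimum is below Sr + ε = u0
    have hA1 : Convex ℝ (Aset φ p f δ) := Aset_convex hconv hφ0 hδ hp
    have hA2 : IsClosed (Aset φ p f δ) := Aset_closed hlsc hφ0 hδ hp
    have hxnotin : ((1 : ℝ), Sr + ε) ∉ Aset φ p f δ := by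
      rintro ⟨q, ψ, hq0, hψ, hq1, hr⟩
      simp only at hq1 hr
      have hqQ : Fq φ p f δ q ≤ S :=
        le_iSup (fun q : {q : Fin n → ℝ // (∀ i, 0 ≤ q i) ∧ ∑ i, q i = 1} =>
          Fq φ p f δ q.1) ⟨q, hq0, hq1.symm⟩
      rw [Fq_real q ψ hψ, hSr] at hqQ
      have : ∑ i, q i * f i + 1 / δ * ∑ i, p i * ψ i ≤ Sr := by exact_mod_cast hqQ
      linarith
    obtain ⟨Lf, u, hLA, hLx⟩ := geometric_hahn_banach_closed_point hA1 hA2 hxnotin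
    set a : ℝ := Lf (1, 0) with ha
    set b : ℝ := Lf (0, 1) with hb
    have hrepr : ∀ t r : ℝ, Lf (t, r) = a * t + b * r := by
      intro t r
      have hdec : ((t, r) : ℝ × ℝ) = t • ((1:ℝ), (0:ℝ)) + r • ((0:ℝ), (1:ℝ)) := by
        simp [Prod.ext_iff]
      rw [hdec, map_add, map_smul, map_smul, smul_eq_mul, smul_eq_mul, ha, hb]
      ring
    have hmem1 : ∀ s : ℝ, s ≤ 0 → ((1 : ℝ), m + s) ∈ Aset φ p f δ := by
      intro s hs
      refine ⟨p, 0, fun i => (hp i).le, hψp, by simp [hps], ?_⟩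
      simp only [Pi.zero_apply, mul_zero, Finset.sum_const_zero]
      simp only [hm]
      linarith
    have hbpos : 0 < b := by
      rcases lt_trichotomy b 0 with hblt | hbeq | hbgt
      · exfalso
        set s : ℝ := min 0 ((u - a - b * m) / b) with hs
        have hs0 : s ≤ 0 := min_le_left _ _
        have h1 := hLA _ (hmem1 s hs0)
        rw [hrepr] at h1
        have h2 : b * ((u - a - b * m) / b) ≤ b * s :=
          mul_le_mul_of_nonpos_left (min_le_right _ _) hblt.le
        rw [mul_div_cancel₀ _ hblt.ne] at h2
        nlinarith
      · exfalso
        have h1 := hLA _ (hmem1 0 le_rfl)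
        have h2 := hLx
        rw [hrepr] at h1 h2
        rw [hbeq] at h1 h2
        simp at h1 h2
        linarith
      · exact hbgt
    set c : ℝ := a / b with hc
    have hacb : a = c * b := (div_mul_cancel₀ a hbpos.ne').symm
    have hub : u < b * (c + (Sr + ε)) := by
      have h2 := hLx
      rw [hrepr] at h2
      nlinarith [h2]
    have hH : ∀ q ψ : Fin n → ℝ, (∀ i, 0 ≤ q i) →
        (∀ i, φ (q i / p i) = ((ψ i : ℝ) : EReal)) →
        c * (∑ i, q i) + (∑ i, q i * f i + 1 / δ * ∑ i, p i * ψ i) < c + (Sr + ε) := by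
      intro q ψ hq0 hψ
      have h1 := hLA (∑ i, q i, ∑ i, q i * f i + 1 / δ * ∑ i, p i * ψ i)
        ⟨q, ψ, hq0, hψ, rfl, le_rfl⟩
      rw [hrepr] at h1
      have hexp : b * (c * (∑ i, q i) + (∑ i, q i * f i + 1 / δ * ∑ i, p i * ψ i))
          = a * (∑ i, q i) + b * (∑ i, q i * f i + 1 / δ * ∑ i, p i * ψ i) := by
        rw [hacb]; ring
      have h3 : b * (c * (∑ i, q i) + (∑ i, q i * f i + 1 / δ * ∑ i, p i * ψ i))
          < b * (c + (Sr + ε)) := by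
        calc b * (c * (∑ i, q i) + (∑ i, q i * f i + 1 / δ * ∑ i, p i * ψ i))
            = a * (∑ i, q i) + b * (∑ i, q i * f i + 1 / δ * ∑ i, p i * ψ i) := hexp
          _ < u := h1
          _ < b * (c + (Sr + ε)) := hub
      exact (mul_lt_mul_iff_right₀ hbpos).1 h3
    -- conjugates are finite
    have hstar_lb : ∀ i : Fin n, ((-δ * (f i + c) : ℝ) : EReal) ≤ phiStar φ (-δ * (f i + c)) := by
      intro i
      have h1 := le_iSup (fun z : ℝ => (((-δ * (f i + c)) * z : ℝ) : EReal) - φ z) (1 : ℝ)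
      rw [hone, sub_zero, mul_one] at h1
      exact h1
    have hstar_ub : ∀ i : Fin n, phiStar φ (-δ * (f i + c))
        ≤ (((-δ) * ((Sr + ε) - m + c * p i + p i * f i) / p i : ℝ) : EReal) := by
      intro i
      refine iSup_le fun z => ?_
      rcases eq_or_ne (φ z) ⊤ with htop | hne
      · rw [htop, EReal.sub_top]; exact bot_le
      · have hbne : φ z ≠ ⊥ := ne_of_gt (lt_of_lt_of_le (by simp) (hφ0 z))
        set w : ℝ := (φ z).toReal with hw
        have hweq : φ z = ((w : ℝ) : EReal) := (EReal.coe_toReal hne hbne).symm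
        have hz0 : 0 ≤ z := by
          by_contra hzc
          push_neg at hzc
          exact hne (hneg z hzc)
        set qv : Fin n → ℝ := fun j => if j = i then p i * z else p j with hqv
        set ψv : Fin n → ℝ := fun j => if j = i then w else 0 with hψv
        have hqv0 : ∀ j, 0 ≤ qv j := by
          intro j
          rw [hqv]
          dsimp only
          split
          · exact mul_nonneg (hp i).le hz0
          · exact (hp j).le
        have hψveq : ∀ j, φ (qv j / p j) = ((ψv j : ℝ) : EReal) := by
          intro j
          rw [hqv, hψv]
          dsimp only
          split
          · next hji =>
            subst hji
            rw [mul_div_cancel_left₀ _ (hp j).ne', hweq]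
          · rw [div_self (hp j).ne', hone]; norm_num
        have h1 := hH qv ψv hqv0 hψveq
        have hsq : ∑ j, qv j = p i * z + (1 - p i) := by
          rw [hqv]
          rw [sum_ite_fin i (p i * z) p, hps]
        have hsqf : ∑ j, qv j * f j = p i * z * f i + (m - p i * f i) := by
          rw [hqv]
          have : ∀ j, (if j = i then p i * z else p j) * f j
              = if j = i then p i * z * f i else p j * f j := by
            intro j
            split
            · next h => subst h; rfl
            · rfl
          rw [Finset.sum_congr rfl fun j _ => this j,
            sum_ite_fin i (p i * z * f i) (fun j => p j * f j)]
        have hspψ : ∑ j, p j * ψv j = p i * w := by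
          rw [hψv]
          have : ∀ j, p j * (if j = i then w else 0)
              = if j = i then p i * w else 0 := by
            intro j
            split
            · next h => subst h; rfl
            · exact mul_zero _
          rw [Finset.sum_congr rfl fun j _ => this j,
            sum_ite_fin i (p i * w) (fun _ => 0)]
          simp
        rw [hsq, hsqf, hspψ] at h1
        rw [hweq, ← EReal.coe_sub]
        refine EReal.coe_le_coe_iff.2 ?_
        rw [le_div_iff₀ (hp i)]
        have hid : -δ * (1 / δ * (p i * w)) = -(p i * w) := by field_simp
        nlinarith [mul_lt_mul_of_pos_left h1 hmδ, hid]
    have hstar_real : ∀ i : Fin n, ∃ t : ℝ, phiStar φ (-δ * (f i + c)) = ((t : ℝ) : EReal) := by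
      intro i
      refine ⟨(phiStar φ (-δ * (f i + c))).toReal, (EReal.coe_toReal ?_ ?_).symm⟩
      · exact ne_top_of_le_ne_top (EReal.coe_ne_top _) (hstar_ub i)
      · intro hbot
        have hlbi := hstar_lb i
        rw [hbot] at hlbi
        exact (EReal.coe_ne_bot _) (le_bot_iff.1 hlbi)
    choose tv htv using hstar_real
    have hsum_t : ∑ i, p i * tv i ≤ (-δ) * (c + (Sr + ε)) := by
      refine le_of_forall_pos_le_add fun ε' hε' => ?_
      have hzex : ∀ i : Fin n, ∃ z : ℝ,
          ((tv i - ε' : ℝ) : EReal) < (((-δ * (f i + c)) * z : ℝ) : EReal) - φ z := by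
        intro i
        have h1 : ((tv i - ε' : ℝ) : EReal) < phiStar φ (-δ * (f i + c)) := by
          rw [htv i]
          exact_mod_cast sub_lt_self (tv i) hε'
        exact lt_iSup_iff.1 h1
      choose zv hzv using hzex
      have hψex : ∀ i : Fin n, ∃ w : ℝ, φ (zv i) = ((w : ℝ) : EReal)
          ∧ 0 ≤ zv i ∧ (-δ * (f i + c)) * zv i - w > tv i - ε' := by
        intro i
        have hne : φ (zv i) ≠ ⊤ := by
          intro htop
          have := hzv i
          rw [htop, EReal.sub_top] at this
          exact absurd this (by simp)
        have hbne : φ (zv i) ≠ ⊥ := ne_of_gt (lt_of_lt_of_le (by simp) (hφ0 _))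
        refine ⟨(φ (zv i)).toReal, (EReal.coe_toReal hne hbne).symm, ?_, ?_⟩
        · by_contra hzc
          push_neg at hzc
          exact hne (hneg _ hzc)
        · have := hzv i
          rw [(EReal.coe_toReal hne hbne).symm, ← EReal.coe_sub] at this
          exact_mod_cast this
      choose wv hwv hzv0 hineq using hψex
      have h1 := hH (fun i => p i * zv i) wv
        (fun i => mul_nonneg (hp i).le (hzv0 i))
        (fun i => by rw [mul_div_cancel_left₀ _ (hp i).ne']; exact hwv i)
      -- multiply h1 by -δ and compare
      have hidsum : ∑ i, p i * ((-δ * (f i + c)) * zv i - wv i)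
          = (-δ) * (c * (∑ i, p i * zv i) + ∑ i, (p i * zv i) * f i) - ∑ i, p i * wv i := by
        have e1 : ∑ i, p i * ((-δ * (f i + c)) * zv i - wv i)
            = ∑ i, ((-δ) * (c * (p i * zv i) + (p i * zv i) * f i) - p i * wv i) :=
          Finset.sum_congr rfl fun i _ => by ring
        rw [e1, Finset.sum_sub_distrib, ← Finset.mul_sum, Finset.sum_add_distrib,
          ← Finset.mul_sum]
      have hlow : ∑ i, p i * (tv i - ε') ≤ ∑ i, p i * ((-δ * (f i + c)) * zv i - wv i) :=
        Finset.sum_le_sum fun i _ => mul_le_mul_of_nonneg_left (hineq i).le (hp i).le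
      have hlow2 : ∑ i, p i * (tv i - ε') = ∑ i, p i * tv i - ε' := by
        rw [Finset.sum_congr rfl fun i _ => mul_sub (p i) (tv i) ε',
          Finset.sum_sub_distrib, ← Finset.sum_mul, hps, one_mul]
      have hid2 : -δ * (1 / δ * (∑ i, p i * wv i)) = -(∑ i, p i * wv i) := by
        field_simp
      nlinarith [mul_lt_mul_of_pos_left h1 hmδ, hid2, hidsum, hlow, hlow2]
    have hT : ∑ i, ((p i : ℝ) : EReal) * phiStar φ (-δ * (f i + c))
        = ((∑ i, p i * tv i : ℝ) : EReal) := by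
      rw [coe_sum']
      exact Finset.sum_congr rfl fun i _ => by rw [htv i, ← EReal.coe_mul]
    have hgc : g c ≤ ((Sr + ε : ℝ) : EReal) := by
      rw [hgdef]
      dsimp only
      rw [hT, ← EReal.coe_mul, ← EReal.coe_sub]
      refine EReal.coe_le_coe_iff.2 ?_
      have hfin : -(1/δ) * ((-δ) * (c + (Sr + ε))) = c + (Sr + ε) := by field_simp
      nlinarith [mul_le_mul_of_nonneg_left hsum_t (by linarith : (0:ℝ) ≤ -(1/δ)), hfin]
    have hfinal : (⨅ c' : ℝ, g c') ≤ ((Sr + ε : ℝ) : EReal) := le_trans (iInf_le g c) hgc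
    have hSrε : Sr + ε = u0 := by rw [hεdef]; ring
    rw [hSrε] at hfinal
    exact absurd (lt_of_le_of_lt hfinal hu2) (lt_irrefl _)
  exact le_antisymm (le_iInf hweak) hstrong
end

section
/- Worst-case sensitivity equals the scaled variance of the reward (equation (19)). Let p = (p_1, …, p_n) be a probability vector with p_i > 0 and let f_1, …, f_n be real numbers. For ε > 0 let Q(ε) denote a minimizer over probability vectors q of Σ_i q_i f_i + (1/ε) Σ_i p_i φ(q_i/p_i), and set Q(0) = p. Then there exists ε₀ > 0 such that for every ε ∈ (0, ε₀) the minimizer Q(ε) exists and is unique, and the map ε ↦ E_{Q(ε)}[f] = Σ_i q_i(ε) f_i is right-differentiable at ε = 0 with −(d/dε) E_{Q(ε)}[f] |_{ε=0} = (1/φ''(1)) · Var_{P_n}[f], where Var_{P_n}[f] = Σ_i p_i f_i² − (Σ_i p_i f_i)². -/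
open scoped BigOperators Topology

noncomputable section

/-- The real-valued version of `φ`. -/
def phiR (φ : ℝ → EReal) (z : ℝ) : ℝ := (φ z).toReal

/-- `φ''(1)`, the second derivative of (the real version of) `φ` at `z = 1`. -/
def phiPP1 (φ : ℝ → EReal) : ℝ := deriv (deriv (phiR φ)) 1

/-- Standing assumptions on the divergence function `φ`. -/
def PhiOK (φ : ℝ → EReal) : Prop :=
  (∀ x y a b : ℝ, 0 ≤ a → 0 ≤ b → a + b = 1 →
      φ (a * x + b * y) ≤ (a : EReal) * φ x + (b : EReal) * φ y) ∧
  LowerSemicontinuous φ ∧ (∀ z : ℝ, 0 ≤ z → 0 ≤ φ z) ∧ φ 1 = 0 ∧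
  (∀ z : ℝ, z < 0 → φ z = ⊤)

/-- `φ` is finite and twice continuously differentiable near `z = 1`, `φ''(1) > 0`. -/
def PhiSmooth (φ : ℝ → EReal) : Prop :=
  ∃ U : Set ℝ, IsOpen U ∧ (1 : ℝ) ∈ U ∧ (∀ z ∈ U, φ z = ((phiR φ z : ℝ) : EReal)) ∧
    ContDiffOn ℝ 2 (phiR φ) U ∧ 0 < phiPP1 φ

/-- The penalized objective `Σ_i q_i f_i + (1/ε) Σ_i p_i φ(q_i / p_i)`, valued in the
extended reals. -/
def wcObj (φ : ℝ → EReal) {n : ℕ} (p : Fin n → ℝ) (f : Fin n → ℝ) (ε : ℝ)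
    (q : Fin n → ℝ) : EReal :=
  ((∑ i, q i * f i : ℝ) : EReal)
    + ((1 / ε : ℝ) : EReal) * ∑ i, ((p i : ℝ) : EReal) * φ (q i / p i)

private lemma ereal_coe_sum {α : Type*} (s : Finset α) (f : α → ℝ) :
    ((∑ i ∈ s, f i : ℝ) : EReal) = ∑ i ∈ s, ((f i : ℝ) : EReal) := by
  classical
  induction s using Finset.induction_on with
  | empty => simp
  | insert _ _ h ih => rw [Finset.sum_insert h, Finset.sum_insert h, EReal.coe_add, ih]

private lemma ereal_toReal_nonneg {x : EReal} (hx : 0 ≤ x) : 0 ≤ x.toReal := by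
  induction x using EReal.rec with
  | bot => exact absurd hx (by simp)
  | coe y => exact_mod_cast hx
  | top => simp

private lemma ereal_coe_mul_nonneg {p : ℝ} (hp : 0 < p) {x : EReal} (hx : 0 ≤ x) :
    0 ≤ (p : EReal) * x := by
  induction x using EReal.rec with
  | bot => exact absurd hx (by simp)
  | coe y =>
      rw [← EReal.coe_mul]
      exact_mod_cast mul_nonneg hp.le (by exact_mod_cast hx)
  | top => rw [EReal.coe_mul_top_of_pos hp]; exact le_top

set_option maxHeartbeats 4000000 in
/-- Worst-case sensitivity equals the scaled variance of the reward (equation (19)):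
for small `ε > 0` the worst-case distribution `Q(ε)` exists and is unique, and
`−(d/dε) E_{Q(ε)}[f] |_{ε=0} = (1/φ''(1)) Var_{P_n}[f]` (as a right derivative). -/
theorem worst_case_sensitivity_eq_variance
    (φ : ℝ → EReal) (hφ : PhiOK φ) (hφs : PhiSmooth φ)
    {n : ℕ} (p : Fin n → ℝ) (hp : ∀ i, 0 < p i) (hps : ∑ i, p i = 1)
    (f : Fin n → ℝ) :
    ∃ ε₀ > (0 : ℝ), ∃ Q : ℝ → Fin n → ℝ,
      Q 0 = p ∧
      (∀ ε ∈ Set.Ioo (0 : ℝ) ε₀,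
        ((∀ i, 0 ≤ Q ε i) ∧ ∑ i, Q ε i = 1) ∧
        (∀ q : Fin n → ℝ, (∀ i, 0 ≤ q i) → ∑ i, q i = 1 →
          wcObj φ p f ε (Q ε) ≤ wcObj φ p f ε q) ∧
        (∀ q : Fin n → ℝ, (∀ i, 0 ≤ q i) → ∑ i, q i = 1 →
          wcObj φ p f ε q ≤ wcObj φ p f ε (Q ε) → q = Q ε)) ∧
      HasDerivWithinAt (fun ε => ∑ i, Q ε i * f i)
        (-(1 / phiPP1 φ) * ((∑ i, p i * f i ^ 2) - (∑ i, p i * f i) ^ 2))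
        (Set.Ici 0) 0 := by
  classical
  obtain ⟨U, hUo, hU1, hUeq, hUC2, hc⟩ := hφs
  have hconv := hφ.1
  have hnn : ∀ z : ℝ, 0 ≤ z → 0 ≤ φ z := hφ.2.2.1
  have hφ1 : φ 1 = 0 := hφ.2.2.2.1
  set Φ : ℝ → ℝ := phiR φ with hΦdef
  set g : ℝ → ℝ := deriv Φ with hgdef
  set c : ℝ := phiPP1 φ with hcdef
  have hcne : c ≠ 0 := ne_of_gt hc
  have hderivg1 : deriv g 1 = c := rfl
  -- first and second derivative regularity
  have hg1C : ContDiffOn ℝ 1 g U := hUC2.deriv_of_isOpen hUo (by norm_num)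
  have hggC : ContinuousOn (deriv g) U := hg1C.continuousOn_deriv_of_isOpen hUo le_rfl
  have hΦdiff : ∀ z, z ∈ U → HasDerivAt Φ (g z) z := by
    intro z hz
    exact ((hUC2.contDiffAt (hUo.mem_nhds hz)).differentiableAt (by norm_num)).hasDerivAt
  -- the ball around 1
  have hev : ∀ᶠ z in 𝓝 (1 : ℝ), z ∈ U ∧ 0 < z ∧ 0 < deriv g z := by
    have h1 : ∀ᶠ z in 𝓝 (1 : ℝ), z ∈ U := hUo.mem_nhds hU1
    have h2 : ∀ᶠ z in 𝓝 (1 : ℝ), 0 < z := eventually_gt_nhds (by norm_num)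
    have hcont : ContinuousAt (deriv g) 1 := hggC.continuousAt (hUo.mem_nhds hU1)
    have h3 : ∀ᶠ z in 𝓝 (1 : ℝ), 0 < deriv g z := by
      have : ∀ᶠ y in 𝓝 (deriv g 1), 0 < y := by
        rw [hderivg1]; exact eventually_gt_nhds hc
      exact hcont.eventually this
    filter_upwards [h1, h2, h3] with z hz1 hz2 hz3 using ⟨hz1, hz2, hz3⟩
  obtain ⟨δ, hδ, hball⟩ := Metric.eventually_nhds_iff.mp hev
  have hballU : ∀ z : ℝ, dist z 1 < δ → z ∈ U := fun z hz => (hball hz).1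
  have hballpos : ∀ z : ℝ, dist z 1 < δ → 0 < z := fun z hz => (hball hz).2.1
  have hballg : ∀ z : ℝ, dist z 1 < δ → 0 < deriv g z := fun z hz => (hball hz).2.2
  have hballeq : ∀ z : ℝ, dist z 1 < δ → φ z = ((Φ z : ℝ) : EReal) := fun z hz =>
    hUeq z (hballU z hz)
  -- Φ 1 = 0 and g 1 = 0
  have hΦ1 : Φ 1 = 0 := by simp [hΦdef, phiR, hφ1]
  have hg1 : g 1 = 0 := by
    have hmin : IsLocalMin Φ 1 := by
      filter_upwards [eventually_gt_nhds (show (0:ℝ) < 1 by norm_num)] with z hz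
      rw [hΦ1]
      exact ereal_toReal_nonneg (hnn z hz.le)
    exact hmin.deriv_eq_zero
  -- strict derivative of g at 1 and its local inverse ψ
  have hgs : HasStrictDerivAt g c 1 := by
    have h := (hg1C.contDiffAt (hUo.mem_nhds hU1)).hasStrictDerivAt one_ne_zero
    rwa [hderivg1] at h
  have hF := hgs.hasStrictFDerivAt_equiv hcne
  set ψ : ℝ → ℝ := hF.localInverse g _ 1 with hψdef
  have hψ0 : ψ 0 = 1 := by
    have := hF.localInverse_apply_image
    rwa [hg1] at this
  have hψd : HasStrictDerivAt ψ c⁻¹ 0 := by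
    have := hgs.to_localInverse hcne
    rwa [hg1] at this
  have hψr : ∀ᶠ y in 𝓝 (0 : ℝ), g (ψ y) = y := by
    have := hF.eventually_right_inverse
    rwa [hg1] at this
  have hψc : ContinuousAt ψ 0 := by
    have := hF.localInverse_continuousAt
    rwa [hg1] at this
  have hψball : ∀ᶠ y in 𝓝 (0 : ℝ), dist (ψ y) 1 < δ := by
    have ht : Filter.Tendsto ψ (𝓝 0) (𝓝 1) := hψ0 ▸ hψc
    have := ht (Metric.ball_mem_nhds 1 hδ)
    filter_upwards [this] with y hy using hy
  obtain ⟨r, hr, hrP⟩ := Metric.eventually_nhds_iff.mp (hψr.and hψball)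
  -- the 2D implicit function setup
  set μ : ℝ := ∑ i, p i * f i with hμdef
  set L1 : ℝ × ℝ →L[ℝ] ℝ := ContinuousLinearMap.fst ℝ ℝ ℝ with hL1def
  set L2 : ℝ × ℝ →L[ℝ] ℝ := ContinuousLinearMap.snd ℝ ℝ ℝ with hL2def
  set M : ℝ × ℝ →L[ℝ] ℝ × ℝ := L1.prod ((-(c⁻¹ * μ)) • L1 + c⁻¹ • L2) with hMdef
  set N : ℝ × ℝ →L[ℝ] ℝ × ℝ := L1.prod (μ • L1 + c • L2) with hNdef
  have hMN : Function.LeftInverse N M := by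
    intro x
    simp only [hMdef, hNdef, hL1def, hL2def, ContinuousLinearMap.prod_apply,
      ContinuousLinearMap.add_apply, ContinuousLinearMap.smul_apply,
      ContinuousLinearMap.coe_fst', ContinuousLinearMap.coe_snd', smul_eq_mul]
    ext <;> simp <;> field_simp <;> ring
  have hNM : Function.RightInverse N M := by
    intro x
    simp only [hMdef, hNdef, hL1def, hL2def, ContinuousLinearMap.prod_apply,
      ContinuousLinearMap.add_apply, ContinuousLinearMap.smul_apply,
      ContinuousLinearMap.coe_fst', ContinuousLinearMap.coe_snd', smul_eq_mul]
    ext <;> simp <;> field_simp <;> ring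
  set e : (ℝ × ℝ) ≃L[ℝ] (ℝ × ℝ) := ContinuousLinearEquiv.equivOfInverse M N hMN hNM with hedef
  set Fm : ℝ × ℝ → ℝ := fun x => (∑ i, p i * ψ (x.2 - x.1 * f i)) - 1 with hFmdef
  set G : ℝ × ℝ → ℝ × ℝ := fun x => (x.1, Fm x) with hGdef
  have hGe : HasStrictFDerivAt G (e : (ℝ × ℝ) →L[ℝ] (ℝ × ℝ)) ((0 : ℝ), (0 : ℝ)) := by
    have hfst : HasStrictFDerivAt (fun x : ℝ × ℝ => x.1) L1 ((0:ℝ), (0:ℝ)) :=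
      hasStrictFDerivAt_fst
    have hterm : ∀ i : Fin n, HasStrictFDerivAt
        (fun x : ℝ × ℝ => p i * (ψ ∘ (fun x : ℝ × ℝ => x.2 - x.1 * f i)) x)
        (p i • (c⁻¹ • (L2 - f i • L1))) ((0:ℝ), (0:ℝ)) := by
      intro i
      have hin : HasStrictFDerivAt (fun x : ℝ × ℝ => x.2 - x.1 * f i) (L2 - f i • L1)
          ((0:ℝ), (0:ℝ)) := hasStrictFDerivAt_snd.sub (hasStrictFDerivAt_fst.mul_const (f i))
      have h0 : (0:ℝ) = ((0:ℝ), (0:ℝ)).2 - ((0:ℝ), (0:ℝ)).1 * f i := by norm_num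
      have hcomp := hψd.comp_hasStrictFDerivAt_of_eq ((0:ℝ), (0:ℝ)) hin h0
      exact hcomp.const_mul (p i)
    have hFm : HasStrictFDerivAt Fm (∑ i, p i • (c⁻¹ • (L2 - f i • L1))) ((0:ℝ), (0:ℝ)) := by
      have := (HasStrictFDerivAt.fun_sum (fun i (_ : i ∈ Finset.univ) => hterm i)).sub_const (1:ℝ)
      exact this
    have hsum_eq : (∑ i : Fin n, p i • (c⁻¹ • (L2 - f i • L1)))
        = (-(c⁻¹ * μ)) • L1 + c⁻¹ • L2 := by
      apply ContinuousLinearMap.ext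
      intro x
      simp only [ContinuousLinearMap.sum_apply, ContinuousLinearMap.smul_apply,
        ContinuousLinearMap.sub_apply, ContinuousLinearMap.add_apply, hL1def, hL2def,
        ContinuousLinearMap.coe_fst', ContinuousLinearMap.coe_snd', smul_eq_mul]
      have h1 : ∀ i ∈ Finset.univ, p i * (c⁻¹ * (x.2 - f i * x.1))
          = c⁻¹ * x.2 * p i - c⁻¹ * x.1 * (p i * f i) := by intro i _; ring
      rw [Finset.sum_congr rfl h1, Finset.sum_sub_distrib, ← Finset.mul_sum, ← Finset.mul_sum,
        hps, ← hμdef]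
      ring
    have hecoe : (e : (ℝ × ℝ) →L[ℝ] (ℝ × ℝ)) = M := by
      apply ContinuousLinearMap.ext
      intro x
      exact ContinuousLinearEquiv.equivOfInverse_apply M N hMN hNM x
    rw [hecoe, hMdef]
    exact hfst.prodMk (hsum_eq ▸ hFm)
  set inv : ℝ × ℝ → ℝ × ℝ := hGe.localInverse G e ((0 : ℝ), (0 : ℝ)) with hinvdef
  have hG00 : G ((0 : ℝ), (0 : ℝ)) = ((0 : ℝ), (0 : ℝ)) := by
    simp [hGdef, hFmdef, hψ0, hps]
  have hinv00 : inv ((0 : ℝ), (0 : ℝ)) = ((0 : ℝ), (0 : ℝ)) := by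
    have := hGe.localInverse_apply_image
    rwa [hG00] at this
  set s : ℝ → ℝ := fun ε => (inv (ε, 0)).2 with hsdef
  have hs0 : s 0 = 0 := by
    show (inv (0, 0)).2 = 0
    rw [hinv00]
  have hrinv : ∀ᶠ y in 𝓝 ((0 : ℝ), (0 : ℝ)), G (inv y) = y := by
    have := hGe.eventually_right_inverse
    rwa [hG00] at this
  have hmap : Filter.Tendsto (fun ε : ℝ => ((ε, (0 : ℝ)) : ℝ × ℝ)) (𝓝 0) (𝓝 ((0:ℝ), (0:ℝ))) := by
    exact Filter.Tendsto.prodMk_nhds Filter.tendsto_id tendsto_const_nhds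
  have hFs : ∀ᶠ ε in 𝓝 (0 : ℝ), (∑ i, p i * ψ (s ε - ε * f i)) = 1 := by
    filter_upwards [hmap.eventually hrinv] with ε hε
    have h1 : (inv (ε, 0)).1 = ε := congrArg Prod.fst hε
    have h2 : Fm (inv (ε, 0)) = 0 := by
      have := congrArg Prod.snd hε
      simpa [hGdef] using this
    have h3 : inv (ε, 0) = (ε, s ε) := Prod.ext h1 rfl
    rw [h3] at h2
    simpa [hFmdef, sub_eq_zero] using h2
  have hscont : ContinuousAt s 0 := by
    have hinvc : ContinuousAt inv ((0:ℝ), (0:ℝ)) := by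
      have := hGe.localInverse_continuousAt
      rwa [hG00] at this
    have hmapc : ContinuousAt (fun ε : ℝ => ((ε, (0 : ℝ)) : ℝ × ℝ)) 0 :=
      (continuous_id.prodMk continuous_const).continuousAt
    exact (continuous_snd.continuousAt).comp (ContinuousAt.comp (f := fun ε : ℝ => ((ε, (0 : ℝ)) : ℝ × ℝ)) hinvc hmapc)
  have hsd : HasDerivAt s μ 0 := by
    have hinvd : HasStrictFDerivAt inv (e.symm : (ℝ × ℝ) →L[ℝ] (ℝ × ℝ)) ((0:ℝ), (0:ℝ)) := by
      have := hGe.to_localInverse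
      rwa [hG00] at this
    have hcurve : HasDerivAt (fun ε : ℝ => ((ε, (0 : ℝ)) : ℝ × ℝ)) ((1 : ℝ), (0 : ℝ)) 0 :=
      (hasDerivAt_id 0).prodMk (hasDerivAt_const (0:ℝ) (0:ℝ))
    have h1 : HasDerivAt (fun ε : ℝ => inv (ε, 0)) (e.symm ((1:ℝ), (0:ℝ))) 0 :=
      hinvd.hasFDerivAt.comp_hasDerivAt (f := fun ε : ℝ => ((ε, (0 : ℝ)) : ℝ × ℝ)) 0 hcurve
    have h2 : HasDerivAt s ((e.symm ((1:ℝ), (0:ℝ))).2) 0 :=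
      (ContinuousLinearMap.snd ℝ ℝ ℝ).hasFDerivAt.comp_hasDerivAt 0 h1
    have h3 : (e.symm ((1:ℝ), (0:ℝ))).2 = μ := by
      rw [hedef, ContinuousLinearEquiv.symm_equivOfInverse]
      simp [hNdef, hL1def, hL2def]
    rwa [h3] at h2
  -- supporting line inequality and strict version
  have hsupport : ∀ z₀ : ℝ, dist z₀ 1 < δ → ∀ z : ℝ, 0 ≤ z →
      ((Φ z₀ + g z₀ * (z - z₀) : ℝ) : EReal) ≤ φ z := by
    intro z₀ hz₀ z hz
    by_cases htop : φ z = ⊤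
    · rw [htop]; exact le_top
    have hbot : φ z ≠ ⊥ := by
      intro h
      have h2 := hnn z hz
      rw [h] at h2
      exact absurd h2 (by simp)
    have hweq : φ z = (((φ z).toReal : ℝ) : EReal) := (EReal.coe_toReal htop hbot).symm
    set w : ℝ := (φ z).toReal with hwdef
    have hupper : ∀ a : ℝ, 0 < a → a < 1 → dist (z₀ + a * (z - z₀)) 1 < δ →
        Φ (z₀ + a * (z - z₀)) ≤ Φ z₀ + a * (w - Φ z₀) := by
      intro a ha ha1 hmem
      have h := hconv z z₀ a (1 - a) ha.le (by linarith) (by ring)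
      have heq2 : a * z + (1 - a) * z₀ = z₀ + a * (z - z₀) := by ring
      rw [heq2, hballeq _ hmem, hweq, hballeq _ hz₀, ← EReal.coe_mul, ← EReal.coe_mul,
        ← EReal.coe_add] at h
      have h' := EReal.coe_le_coe_iff.mp h
      linarith
    have hin : HasDerivAt (fun a : ℝ => Φ (z₀ + a * (z - z₀))) (g z₀ * (z - z₀)) 0 := by
      have h1 : HasDerivAt (fun a : ℝ => z₀ + a * (z - z₀)) (z - z₀) 0 := by
        simpa using ((hasDerivAt_id (0:ℝ)).mul_const (z - z₀)).const_add z₀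
      have h2 : HasDerivAt Φ (g z₀) (z₀ + 0 * (z - z₀)) := by
        have := hΦdiff z₀ (hballU z₀ hz₀)
        simpa using this
      exact h2.comp 0 h1
    have htend : Filter.Tendsto (slope (fun a : ℝ => Φ (z₀ + a * (z - z₀))) 0) (𝓝[>] 0)
        (𝓝 (g z₀ * (z - z₀))) := by
      refine (hasDerivAt_iff_tendsto_slope.mp hin).mono_left (nhdsWithin_mono _ ?_)
      intro x hx
      exact ne_of_gt hx
    have hkey : g z₀ * (z - z₀) ≤ w - Φ z₀ := by
      refine le_of_tendsto htend ?_
      have hev1 : ∀ᶠ a in 𝓝[>] (0:ℝ), dist (z₀ + a * (z - z₀)) 1 < δ := by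
        have hco : Filter.Tendsto (fun a : ℝ => z₀ + a * (z - z₀)) (𝓝 0) (𝓝 z₀) := by
          have hcc : Continuous (fun a : ℝ => z₀ + a * (z - z₀)) :=
            continuous_const.add (continuous_id.mul continuous_const)
          have h := hcc.tendsto (0:ℝ)
          simpa using h
        have h := hco (Metric.isOpen_ball.mem_nhds (Metric.mem_ball.mpr hz₀))
        refine Filter.Eventually.filter_mono nhdsWithin_le_nhds ?_
        filter_upwards [h] with a ha using Metric.mem_ball.mp ha
      have hev3 : ∀ᶠ a in 𝓝[>] (0:ℝ), a < 1 :=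
        Filter.Eventually.filter_mono nhdsWithin_le_nhds (eventually_lt_nhds (by norm_num))
      filter_upwards [hev1, hev3, self_mem_nhdsWithin] with a hmem ha1 ha
      have hb := hupper a ha ha1 hmem
      rw [slope_def_field, div_le_iff₀ (by simpa using ha : (0:ℝ) < a - 0)]
      have h0 : z₀ + 0 * (z - z₀) = z₀ := by ring
      rw [h0]
      nlinarith [hb]
    rw [hweq]
    exact EReal.coe_le_coe_iff.mpr (by linarith)
  have hstrict : ∀ z₀ : ℝ, dist z₀ 1 < δ → ∀ z : ℝ, 0 ≤ z →
      φ z = ((Φ z₀ + g z₀ * (z - z₀) : ℝ) : EReal) → z = z₀ := by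
    intro z₀ hz₀ z hz heqz
    by_contra hne
    have hzne : z - z₀ ≠ 0 := sub_ne_zero.mpr (fun h => hne h)
    have hball0 : ∀ᶠ a in 𝓝 (0:ℝ), dist (z₀ + a * (z - z₀)) 1 < δ := by
      have hcc : Continuous (fun a : ℝ => z₀ + a * (z - z₀)) :=
            continuous_const.add (continuous_id.mul continuous_const)
      have hco : Filter.Tendsto (fun a : ℝ => z₀ + a * (z - z₀)) (𝓝 0) (𝓝 z₀) := by
        have h := hcc.tendsto (0:ℝ)
        simpa using h
      have h := hco (Metric.isOpen_ball.mem_nhds (Metric.mem_ball.mpr hz₀))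
      filter_upwards [h] with a ha using Metric.mem_ball.mp ha
    obtain ⟨ρ, hρ, hρP⟩ := Metric.eventually_nhds_iff.mp hball0
    set a₁ : ℝ := min ρ 1 / 2 with ha₁def
    have ha₁pos : 0 < a₁ := half_pos (lt_min hρ one_pos)
    have ha₁lt1 : a₁ < 1 := by
      have h := min_le_right ρ 1
      rw [ha₁def]; linarith
    have ha₁ltρ : a₁ < ρ := by
      have h := min_le_left ρ 1
      rw [ha₁def]; linarith
    have hmem : ∀ a : ℝ, 0 ≤ a → a ≤ a₁ → dist (z₀ + a * (z - z₀)) 1 < δ := by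
      intro a h0 h1
      apply hρP
      rw [Real.dist_eq, sub_zero, abs_of_nonneg h0]
      linarith
    have hclaim : ∀ a : ℝ, 0 < a → a ≤ a₁ →
        Φ (z₀ + a * (z - z₀)) = Φ z₀ + g z₀ * (a * (z - z₀)) := by
      intro a ha haa
      have hmem' := hmem a ha.le haa
      have hup : Φ (z₀ + a * (z - z₀)) ≤ Φ z₀ + g z₀ * (a * (z - z₀)) := by
        have h := hconv z z₀ a (1 - a) ha.le (by linarith) (by ring)
        have heq2 : a * z + (1 - a) * z₀ = z₀ + a * (z - z₀) := by ring
        rw [heq2, hballeq _ hmem', heqz, hballeq _ hz₀, ← EReal.coe_mul, ← EReal.coe_mul,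
          ← EReal.coe_add] at h
        have h' := EReal.coe_le_coe_iff.mp h
        nlinarith [h']
      have hlow : Φ z₀ + g z₀ * (a * (z - z₀)) ≤ Φ (z₀ + a * (z - z₀)) := by
        have h := hsupport z₀ hz₀ (z₀ + a * (z - z₀)) (hballpos _ hmem').le
        rw [hballeq _ hmem'] at h
        have h' := EReal.coe_le_coe_iff.mp h
        have h2 : z₀ + a * (z - z₀) - z₀ = a * (z - z₀) := by ring
        rw [h2] at h'
        exact h'
      linarith
    set u₁ : ℝ := z₀ + a₁ * (z - z₀) with hu₁def
    have hJ : ∀ u, u ∈ Set.Ioo (min z₀ u₁) (max z₀ u₁) →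
        dist u 1 < δ ∧ Φ u = Φ z₀ + g z₀ * (u - z₀) := by
      intro u hu
      set a : ℝ := (u - z₀) / (z - z₀) with hadef
      have hua : u = z₀ + a * (z - z₀) := by
        rw [hadef]; field_simp; ring
      have ha : 0 < a ∧ a < a₁ := by
        rcases lt_or_gt_of_ne (fun h => hne h) with hlt | hgt
        · have hzz : z - z₀ < 0 := by linarith
          have hu₁lt : u₁ < z₀ := by rw [hu₁def]; nlinarith
          rw [min_eq_right hu₁lt.le, max_eq_left hu₁lt.le] at hu
          obtain ⟨hu1, hu2⟩ := hu
          constructor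
          · rw [hadef]
            exact div_pos_of_neg_of_neg (by linarith) hzz
          · rw [hadef, div_lt_iff_of_neg hzz]
            rw [hu₁def] at hu1
            linarith
        · have hzz : (0:ℝ) < z - z₀ := by linarith
          have hu₁gt : z₀ < u₁ := by rw [hu₁def]; nlinarith
          rw [min_eq_left hu₁gt.le, max_eq_right hu₁gt.le] at hu
          obtain ⟨hu1, hu2⟩ := hu
          constructor
          · rw [hadef]
            exact div_pos (by linarith) hzz
          · rw [hadef, div_lt_iff₀ hzz]
            rw [hu₁def] at hu2
            linarith
      refine ⟨by rw [hua]; exact hmem a ha.1.le ha.2.le, ?_⟩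
      rw [hua, hclaim a ha.1 ha.2.le]
      ring
    set m : ℝ := z₀ + (a₁ / 2) * (z - z₀) with hmdef
    have hmJ : m ∈ Set.Ioo (min z₀ u₁) (max z₀ u₁) := by
      rcases lt_or_gt_of_ne (fun h => hne h) with hlt | hgt
      · have hzz : z - z₀ < 0 := by linarith
        have hu₁lt : u₁ < z₀ := by rw [hu₁def]; nlinarith
        rw [min_eq_right hu₁lt.le, max_eq_left hu₁lt.le]
        constructor
        · rw [hmdef, hu₁def]; nlinarith
        · rw [hmdef]; nlinarith
      · have hzz : (0:ℝ) < z - z₀ := by linarith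
        have hu₁gt : z₀ < u₁ := by rw [hu₁def]; nlinarith
        rw [min_eq_left hu₁gt.le, max_eq_right hu₁gt.le]
        constructor
        · rw [hmdef]; nlinarith
        · rw [hmdef, hu₁def]; nlinarith
    have hmball : dist m 1 < δ := by
      rw [hmdef]
      exact hmem (a₁ / 2) (by linarith) (by linarith)
    have hderiv_all : ∀ u, u ∈ Set.Ioo (min z₀ u₁) (max z₀ u₁) → g u = g z₀ := by
      intro u hu
      have hEq : Φ =ᶠ[𝓝 u] (fun v => Φ z₀ + g z₀ * (v - z₀)) := by
        filter_upwards [isOpen_Ioo.mem_nhds hu] with v hv using (hJ v hv).2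
      have haff : deriv (fun v : ℝ => Φ z₀ + g z₀ * (v - z₀)) u = g z₀ := by
        have h : HasDerivAt (fun v : ℝ => Φ z₀ + g z₀ * (v - z₀)) (g z₀) u := by
          simpa using (((hasDerivAt_id u).sub_const z₀).const_mul (g z₀)).const_add (Φ z₀)
        exact h.deriv
      calc g u = deriv Φ u := rfl
        _ = deriv (fun v : ℝ => Φ z₀ + g z₀ * (v - z₀)) u := hEq.deriv_eq
        _ = g z₀ := haff
    have hgconst : g =ᶠ[𝓝 m] (fun _ => g z₀) := by
      filter_upwards [isOpen_Ioo.mem_nhds hmJ] with v hv using hderiv_all v hv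
    have hder0 : deriv g m = 0 := by
      rw [hgconst.deriv_eq]
      exact deriv_const m (g z₀)
    exact absurd hder0 (ne_of_gt (hballg m hmball))
  -- choose ε₀
  have hev2 : ∀ᶠ ε in 𝓝 (0:ℝ), (∀ i, dist (s ε - ε * f i) 0 < r)
      ∧ (∑ i, p i * ψ (s ε - ε * f i)) = 1 := by
    have h1 : ∀ᶠ ε in 𝓝 (0:ℝ), ∀ i, dist (s ε - ε * f i) 0 < r := by
      rw [Filter.eventually_all]
      intro i
      have ht : Filter.Tendsto (fun ε : ℝ => s ε - ε * f i) (𝓝 0) (𝓝 0) := by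
        have h1 : Filter.Tendsto s (𝓝 (0:ℝ)) (𝓝 0) := by
          have := hscont.tendsto
          rwa [hs0] at this
        have h2 : Filter.Tendsto (fun ε : ℝ => ε * f i) (𝓝 0) (𝓝 (0 * f i)) :=
          (continuous_id.mul continuous_const).continuousAt
        rw [zero_mul] at h2
        simpa using h1.sub h2
      have := ht (Metric.ball_mem_nhds 0 hr)
      filter_upwards [this] with ε hε using hε
    filter_upwards [h1, hFs] with ε hε1 hε2 using ⟨hε1, hε2⟩
  obtain ⟨ε₀, hε₀, hP⟩ := Metric.eventually_nhds_iff.mp hev2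
  refine ⟨ε₀, hε₀, fun ε i => p i * ψ (s ε - ε * f i), ?_, ?_, ?_⟩
  · funext i
    simp [hs0, hψ0]
  · rintro ε ⟨hε, hεlt⟩
    have hdist : dist ε 0 < ε₀ := by
      rw [Real.dist_eq, sub_zero, abs_of_pos hε]; exact hεlt
    obtain ⟨hyr, hsum1⟩ := hP hdist
    have hgz : ∀ i, g (ψ (s ε - ε * f i)) = s ε - ε * f i := fun i => (hrP (hyr i)).1
    have hzball : ∀ i, dist (ψ (s ε - ε * f i)) 1 < δ := fun i => (hrP (hyr i)).2
    have hzpos : ∀ i, 0 < ψ (s ε - ε * f i) := fun i => hballpos _ (hzball i)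
    have hobjQ : wcObj φ p f ε (fun i => p i * ψ (s ε - ε * f i))
        = (((∑ i, (p i * ψ (s ε - ε * f i)) * f i)
            + (1/ε) * ∑ i, p i * Φ (ψ (s ε - ε * f i)) : ℝ) : EReal) := by
      have hQdiv : ∀ i : Fin n, (p i * ψ (s ε - ε * f i)) / p i = ψ (s ε - ε * f i) := fun i =>
        mul_div_cancel_left₀ _ (hp i).ne'
      simp only [wcObj]
      have h1 : (∑ i, ((p i : ℝ) : EReal) * φ ((p i * ψ (s ε - ε * f i)) / p i))
          = ((∑ i, p i * Φ (ψ (s ε - ε * f i)) : ℝ) : EReal) := by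
        rw [ereal_coe_sum]
        refine Finset.sum_congr rfl fun i _ => ?_
        rw [hQdiv i, hballeq _ (hzball i), ← EReal.coe_mul]
      rw [h1, ← EReal.coe_mul, ← EReal.coe_add]
    have hmain : ∀ q : Fin n → ℝ, (∀ i, 0 ≤ q i) → ∑ i, q i = 1 →
        (wcObj φ p f ε (fun i => p i * ψ (s ε - ε * f i)) ≤ wcObj φ p f ε q ∧
          (wcObj φ p f ε q ≤ wcObj φ p f ε (fun i => p i * ψ (s ε - ε * f i)) →
            q = fun i => p i * ψ (s ε - ε * f i))) := by
      intro q hq hqs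
      by_cases htop : ∃ j, φ (q j / p j) = ⊤
      · obtain ⟨j, hj⟩ := htop
        have hterm_nn : ∀ i : Fin n, (0:EReal) ≤ ((p i : ℝ) : EReal) * φ (q i / p i) := fun i =>
          ereal_coe_mul_nonneg (hp i) (hnn _ (div_nonneg (hq i) (hp i).le))
        have hsum_top : (∑ i, ((p i : ℝ) : EReal) * φ (q i / p i)) = ⊤ := by
          refine top_le_iff.mp ?_
          have h := Finset.single_le_sum (f := fun i => ((p i : ℝ) : EReal) * φ (q i / p i))
            (fun i _ => hterm_nn i) (Finset.mem_univ j)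
          simpa only [hj, EReal.coe_mul_top_of_pos (hp j)] using h
        have hqtop : wcObj φ p f ε q = ⊤ := by
          simp only [wcObj]
          rw [hsum_top, EReal.coe_mul_top_of_pos (by positivity : (0:ℝ) < 1/ε),
            EReal.coe_add_top]
        constructor
        · rw [hqtop]; exact le_top
        · intro h
          rw [hqtop, hobjQ] at h
          exact absurd (top_le_iff.mp h) (EReal.coe_ne_top _)
      push_neg at htop
      have hwbot : ∀ i : Fin n, φ (q i / p i) ≠ ⊥ := by
        intro i hbot
        have h := hnn _ (div_nonneg (hq i) (hp i).le)
        rw [hbot] at h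
        exact absurd h (by simp)
      have hw : ∀ i : Fin n, φ (q i / p i) = (((φ (q i / p i)).toReal : ℝ) : EReal) := fun i =>
        (EReal.coe_toReal (htop i) (hwbot i)).symm
      have hobjq : wcObj φ p f ε q
          = (((∑ i, q i * f i) + (1/ε) * ∑ i, p i * (φ (q i / p i)).toReal : ℝ) : EReal) := by
        simp only [wcObj]
        have h1 : (∑ i, ((p i : ℝ) : EReal) * φ (q i / p i))
            = ((∑ i, p i * (φ (q i / p i)).toReal : ℝ) : EReal) := by
          rw [ereal_coe_sum]
          refine Finset.sum_congr rfl fun i _ => ?_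
          rw [EReal.coe_mul, ← hw i]
        rw [h1, ← EReal.coe_mul, ← EReal.coe_add]
      have hsup : ∀ i : Fin n, Φ (ψ (s ε - ε * f i))
          + (s ε - ε * f i) * (q i / p i - ψ (s ε - ε * f i)) ≤ (φ (q i / p i)).toReal := by
        intro i
        have h := hsupport _ (hzball i) (q i / p i) (div_nonneg (hq i) (hp i).le)
        rw [hw i] at h
        have h' := EReal.coe_le_coe_iff.mp h
        rw [hgz i] at h'
        exact h'
      have hterm : ∀ i : Fin n, p i * Φ (ψ (s ε - ε * f i))
          + (s ε - ε * f i) * (q i - p i * ψ (s ε - ε * f i))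
          ≤ p i * (φ (q i / p i)).toReal := by
        intro i
        have h := mul_le_mul_of_nonneg_left (hsup i) (hp i).le
        have hexp : p i * (Φ (ψ (s ε - ε * f i))
            + (s ε - ε * f i) * (q i / p i - ψ (s ε - ε * f i)))
            = p i * Φ (ψ (s ε - ε * f i))
              + (s ε - ε * f i) * (q i - p i * ψ (s ε - ε * f i)) := by
          field_simp [(hp i).ne']
        rw [hexp] at h
        exact h
      have hyQ : (∑ i, (s ε - ε * f i) * (q i - p i * ψ (s ε - ε * f i)))
          = ε * ((∑ i, (p i * ψ (s ε - ε * f i)) * f i) - ∑ i, q i * f i) := by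
        have h1 : ∀ i ∈ Finset.univ, (s ε - ε * f i) * (q i - p i * ψ (s ε - ε * f i))
            = (s ε * q i - s ε * (p i * ψ (s ε - ε * f i)))
              - (ε * (q i * f i) - ε * ((p i * ψ (s ε - ε * f i)) * f i)) := by
          intro i _; ring
        rw [Finset.sum_congr rfl h1, Finset.sum_sub_distrib, Finset.sum_sub_distrib,
          Finset.sum_sub_distrib, ← Finset.mul_sum, ← Finset.mul_sum, ← Finset.mul_sum,
          ← Finset.mul_sum, hqs, hsum1]
        ring
      have hεne : ε ≠ 0 := ne_of_gt hε
      have hsumA : (∑ i, (p i * Φ (ψ (s ε - ε * f i))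
          + (s ε - ε * f i) * (q i - p i * ψ (s ε - ε * f i))))
          = (∑ i, p i * Φ (ψ (s ε - ε * f i)))
            + ε * ((∑ i, (p i * ψ (s ε - ε * f i)) * f i) - ∑ i, q i * f i) := by
        rw [Finset.sum_add_distrib, hyQ]
      constructor
      · rw [hobjq, hobjQ, EReal.coe_le_coe_iff]
        have hsum_le : (∑ i, p i * Φ (ψ (s ε - ε * f i)))
            + ε * ((∑ i, (p i * ψ (s ε - ε * f i)) * f i) - ∑ i, q i * f i)
            ≤ ∑ i, p i * (φ (q i / p i)).toReal := by
          rw [← hsumA]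
          exact Finset.sum_le_sum fun i _ => hterm i
        have h2 := mul_le_mul_of_nonneg_left hsum_le (by positivity : (0:ℝ) ≤ 1/ε)
        rw [mul_add] at h2
        have h3 : (1/ε) * (ε * ((∑ i, (p i * ψ (s ε - ε * f i)) * f i) - ∑ i, q i * f i))
            = (∑ i, (p i * ψ (s ε - ε * f i)) * f i) - ∑ i, q i * f i := by
          field_simp
        rw [h3] at h2
        linarith
      · intro hle
        rw [hobjq, hobjQ, EReal.coe_le_coe_iff] at hle
        have hBA : (∑ i, p i * (φ (q i / p i)).toReal)
            ≤ ∑ i, (p i * Φ (ψ (s ε - ε * f i))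
              + (s ε - ε * f i) * (q i - p i * ψ (s ε - ε * f i))) := by
          rw [hsumA]
          have h2 := mul_le_mul_of_nonneg_left hle (le_of_lt hε)
          have h3 : ε * ((∑ i, q i * f i) + (1/ε) * ∑ i, p i * (φ (q i / p i)).toReal)
              = ε * (∑ i, q i * f i) + ∑ i, p i * (φ (q i / p i)).toReal := by
            field_simp
          have h4 : ε * ((∑ i, (p i * ψ (s ε - ε * f i)) * f i)
              + (1/ε) * ∑ i, p i * Φ (ψ (s ε - ε * f i)))
              = ε * (∑ i, (p i * ψ (s ε - ε * f i)) * f i)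
                + ∑ i, p i * Φ (ψ (s ε - ε * f i)) := by
            field_simp
          rw [h3, h4] at h2
          linarith
        have heach : ∀ i : Fin n, p i * Φ (ψ (s ε - ε * f i))
            + (s ε - ε * f i) * (q i - p i * ψ (s ε - ε * f i))
            = p i * (φ (q i / p i)).toReal := by
          by_contra hcon
          push_neg at hcon
          obtain ⟨j, hj⟩ := hcon
          have hlt : (∑ i, (p i * Φ (ψ (s ε - ε * f i))
              + (s ε - ε * f i) * (q i - p i * ψ (s ε - ε * f i))))
              < ∑ i, p i * (φ (q i / p i)).toReal :=
            Finset.sum_lt_sum (fun i _ => hterm i)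
              ⟨j, Finset.mem_univ j, lt_of_le_of_ne (hterm j) hj⟩
          linarith
        funext i
        have hwi : (φ (q i / p i)).toReal
            = Φ (ψ (s ε - ε * f i)) + (s ε - ε * f i) * (q i / p i - ψ (s ε - ε * f i)) := by
          have h := heach i
          have hexp : p i * (Φ (ψ (s ε - ε * f i))
              + (s ε - ε * f i) * (q i / p i - ψ (s ε - ε * f i)))
              = p i * Φ (ψ (s ε - ε * f i))
                + (s ε - ε * f i) * (q i - p i * ψ (s ε - ε * f i)) := by
            field_simp [(hp i).ne']
          have h2 : p i * (Φ (ψ (s ε - ε * f i))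
              + (s ε - ε * f i) * (q i / p i - ψ (s ε - ε * f i)))
              = p i * (φ (q i / p i)).toReal := by rw [hexp, h]
          exact (mul_left_cancel₀ (hp i).ne' h2).symm
        have hdiv : q i / p i = ψ (s ε - ε * f i) := by
          refine hstrict _ (hzball i) (q i / p i) (div_nonneg (hq i) (hp i).le) ?_
          rw [hw i, hwi, hgz i]
        have := (div_eq_iff (hp i).ne').mp hdiv
        rw [this]
        ring
    refine ⟨⟨fun i => (mul_pos (hp i) (hzpos i)).le, hsum1⟩,
      fun q hq hqs => (hmain q hq hqs).1, fun q hq hqs hle => (hmain q hq hqs).2 hle⟩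
  · have hE : HasDerivAt (fun ε => ∑ i, (p i * ψ (s ε - ε * f i)) * f i)
        (∑ i, (p i * (c⁻¹ * (μ - f i))) * f i) 0 := by
      apply HasDerivAt.fun_sum
      intro i _
      have hinner : HasDerivAt (fun ε : ℝ => s ε - ε * f i) (μ - f i) 0 := by
        simpa using hsd.fun_sub ((hasDerivAt_id (0:ℝ)).mul_const (f i))
      have h0 : (0 : ℝ) = s 0 - 0 * f i := by simp [hs0]
      have hψ' : HasDerivAt ψ c⁻¹ (s 0 - 0 * f i) := h0 ▸ hψd.hasDerivAt
      exact ((hψ'.comp 0 hinner).const_mul (p i)).mul_const (f i)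
    have hval : (∑ i, (p i * (c⁻¹ * (μ - f i))) * f i)
        = -(1 / c) * ((∑ i, p i * f i ^ 2) - μ ^ 2) := by
      have h1 : ∀ i ∈ Finset.univ, (p i * (c⁻¹ * (μ - f i))) * f i
          = c⁻¹ * μ * (p i * f i) - c⁻¹ * (p i * f i ^ 2) := by
        intro i _; ring
      rw [Finset.sum_congr rfl h1, Finset.sum_sub_distrib, ← Finset.mul_sum, ← Finset.mul_sum,
        ← hμdef]
      ring
    exact (hval ▸ hE).hasDerivWithinAt
end
end

section
/- First-order expansion of the in-sample variance and worst-case sensitivity along the DRO/DOO family (equation (20)). Fix data points Y_1, …, Y_n ∈ ℝ^l and a probability vector p with p_i > 0; suppose each x ↦ f(x, Y_i) is twice continuously differentiable, let x₀ ∈ ℝ^d, H := Σ_i p_i ∇²_x f(x₀, Y_i) be invertible, β := Cov_{P_n}[∇_x f(x₀, Y), f(x₀, Y)] ∈ ℝ^d, and let x(δ) be any curve with x(δ) = x₀ + δπ + o(δ) as δ → 0 where π = (1/φ''(1)) H^{−1} β. Then Var_{P_n}[f(x(δ), Y)] = Var_{P_n}[f(x₀, Y)] + (2δ/φ''(1))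 βᵀ H^{−1} β + o(δ) as δ → 0; equivalently, the worst-case sensitivity S(δ) := (1/φ''(1)) Var_{P_n}[f(x(δ), Y)] satisfies S(δ) = S(0) + (2δ/φ''(1)²) βᵀ H^{−1} β + o(δ). -/
open Filter Asymptotics Matrix
open scoped BigOperators Topology

noncomputable section

/-- The gradient of `g : ℝ^d → ℝ`, as the vector of partial derivatives. -/
def gradVec {d : ℕ} (g : (Fin d → ℝ) → ℝ) (x : Fin d → ℝ) : Fin d → ℝ :=
  fun i => fderiv ℝ g x (Pi.single i 1)

/-- The Hessian matrix of `g : ℝ^d → ℝ`. -/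
def hessMat {d : ℕ} (g : (Fin d → ℝ) → ℝ) (x : Fin d → ℝ) : Matrix (Fin d) (Fin d) ℝ :=
  Matrix.of fun i j => fderiv ℝ (fun z => fderiv ℝ g z (Pi.single j 1)) x (Pi.single i 1)

/-- Empirical variance `Var_{P_n}[g] = Σ p_i g_i² − (Σ p_i g_i)²`. -/
def empVar {n : ℕ} (p : Fin n → ℝ) (g : Fin n → ℝ) : ℝ :=
  (∑ i, p i * g i ^ 2) - (∑ i, p i * g i) ^ 2

/-- First-order expansion of the in-sample variance and of the worst-case sensitivity
along the DRO/DOO solution family (equation (20)):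
`Var_{P_n}[f(x(δ), Y)] = Var_{P_n}[f(x₀, Y)] + (2δ/φ''(1)) βᵀ H⁻¹ β + o(δ)`, and the
worst-case sensitivity `S(δ) = (1/φ''(1)) Var_{P_n}[f(x(δ), Y)]` satisfies
`S(δ) = S(0) + (2δ/φ''(1)²) βᵀ H⁻¹ β + o(δ)`. -/
theorem in_sample_variance_expansion
    (φ : ℝ → EReal) (hφ : PhiOK φ) (hφs : PhiSmooth φ)
    {d l n : ℕ} (Y : Fin n → (Fin l → ℝ))
    (p : Fin n → ℝ) (hp : ∀ i, 0 < p i) (hps : ∑ i, p i = 1)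
    (f : (Fin d → ℝ) → (Fin l → ℝ) → ℝ)
    (hsmooth : ∀ i, ContDiff ℝ 2 (fun x => f x (Y i)))
    (x₀ : Fin d → ℝ)
    (H : Matrix (Fin d) (Fin d) ℝ)
    (hHdef : H = ∑ i, p i • hessMat (fun x => f x (Y i)) x₀)
    (hH : H.det ≠ 0)
    (β : Fin d → ℝ)
    (hβdef : β = fun a =>
      (∑ i, p i * (gradVec (fun x => f x (Y i)) x₀ a * f x₀ (Y i)))
        - (∑ i, p i * gradVec (fun x => f x (Y i)) x₀ a) * (∑ i, p i * f x₀ (Y i)))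
    (x : ℝ → (Fin d → ℝ))
    (hx : (fun δ => x δ - (x₀ + δ • ((1 / phiPP1 φ) • H⁻¹.mulVec β)))
      =o[𝓝 (0 : ℝ)] fun δ => δ) :
    ((fun δ => empVar p (fun i => f (x δ) (Y i)) - empVar p (fun i => f x₀ (Y i))
        - 2 * δ / phiPP1 φ * (β ⬝ᵥ H⁻¹.mulVec β)) =o[𝓝 (0 : ℝ)] fun δ => δ) ∧
    ((fun δ => (1 / phiPP1 φ) * empVar p (fun i => f (x δ) (Y i))
        - (1 / phiPP1 φ) * empVar p (fun i => f x₀ (Y i))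
        - 2 * δ / phiPP1 φ ^ 2 * (β ⬝ᵥ H⁻¹.mulVec β)) =o[𝓝 (0 : ℝ)] fun δ => δ) := by
  classical
  set c := phiPP1 φ with hc
  set m : Fin d → ℝ := H⁻¹.mulVec β with hm
  set π : Fin d → ℝ := (1 / c) • m with hπ
  -- x 0 = x₀
  have hx0 : x 0 = x₀ := by
    have h := (hx.def one_pos).self_of_nhds
    simpa [sub_eq_zero] using h
  -- x has derivative π at 0
  have hxd : HasDerivAt x π 0 := by
    rw [hasDerivAt_iff_isLittleO]
    have : (fun δ => x δ - x 0 - (δ - 0) • π) = fun δ => x δ - (x₀ + δ • π) := by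
      funext δ; rw [hx0, sub_zero, sub_sub]
    rw [this]
    simpa using hx
  -- derivative of each f ∘ x
  have hcomp : ∀ i, HasDerivAt (fun δ => f (x δ) (Y i))
      (fderiv ℝ (fun u => f u (Y i)) x₀ π) 0 := by
    intro i
    have hf : HasFDerivAt (fun u => f u (Y i)) (fderiv ℝ (fun u => f u (Y i)) x₀) (x 0) := by
      rw [hx0]
      exact (((hsmooth i).differentiable (by norm_num)) x₀).hasFDerivAt
    exact hf.comp_hasDerivAt 0 hxd
  -- directional derivative as sum over coordinates
  have hDi : ∀ i, fderiv ℝ (fun u => f u (Y i)) x₀ π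
      = ∑ a, π a * gradVec (fun u => f u (Y i)) x₀ a := by
    intro i
    have hsum : π = ∑ a, π a • (Pi.single a 1 : Fin d → ℝ) := by
      funext b
      simp [Finset.sum_apply, Pi.single_apply]
    conv_lhs => rw [hsum]
    rw [map_sum]
    simp [gradVec]
  set g : Fin n → Fin d → ℝ := fun i a => gradVec (fun u => f u (Y i)) x₀ a with hg
  set Di : Fin n → ℝ := fun i => ∑ a, π a * g i a with hDidef
  -- derivative of the variance curve
  have hS : HasDerivAt (fun δ => ∑ i, p i * f (x δ) (Y i)) (∑ i, p i * Di i) 0 := by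
    apply HasDerivAt.fun_sum
    intro i _
    have := ((hcomp i).const_mul (p i))
    rwa [hDi i] at this
  have hQ : HasDerivAt (fun δ => ∑ i, p i * f (x δ) (Y i) ^ 2)
      (∑ i, p i * (2 * f x₀ (Y i) * Di i)) 0 := by
    apply HasDerivAt.fun_sum
    intro i _
    have h2 : HasDerivAt (fun δ => f (x δ) (Y i) ^ 2)
        (2 * f (x 0) (Y i) ^ 1 * fderiv ℝ (fun u => f u (Y i)) x₀ π) 0 := by
      simpa using (hcomp i).fun_pow 2
    have := h2.const_mul (p i)
    rw [hDi i, hx0] at this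
    simpa [mul_assoc] using this
  have hS2 : HasDerivAt (fun δ => (∑ i, p i * f (x δ) (Y i)) ^ 2)
      (2 * (∑ i, p i * f x₀ (Y i)) * (∑ i, p i * Di i)) 0 := by
    have := hS.fun_pow 2
    simpa [hx0] using this
  have hV : HasDerivAt (fun δ => empVar p (fun i => f (x δ) (Y i)))
      ((∑ i, p i * (2 * f x₀ (Y i) * Di i))
        - 2 * (∑ i, p i * f x₀ (Y i)) * (∑ i, p i * Di i)) 0 := by
    simpa [empVar] using hQ.fun_sub hS2
  -- the key algebraic identity for the derivative
  have key : (∑ i, p i * (2 * f x₀ (Y i) * Di i))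
      - 2 * (∑ i, p i * f x₀ (Y i)) * (∑ i, p i * Di i)
      = 2 / c * (β ⬝ᵥ m) := by
    have hπa : ∀ a, π a = (1 / c) * m a := fun a => by simp [hπ]
    have e1 : ∑ i, p i * (2 * f x₀ (Y i) * Di i)
        = ∑ a, π a * (2 * ∑ i, p i * (g i a * f x₀ (Y i))) := by
      simp_rw [hDidef, Finset.mul_sum]
      rw [Finset.sum_comm]
      exact Finset.sum_congr rfl fun a _ => Finset.sum_congr rfl fun i _ => by ring
    have e2 : ∑ i, p i * Di i = ∑ a, π a * ∑ i, p i * g i a := by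
      simp_rw [hDidef, Finset.mul_sum]
      rw [Finset.sum_comm]
      exact Finset.sum_congr rfl fun a _ => Finset.sum_congr rfl fun i _ => by ring
    have e3 : 2 * (∑ i, p i * f x₀ (Y i)) * (∑ a, π a * ∑ i, p i * g i a)
        = ∑ a, 2 * (∑ i, p i * f x₀ (Y i)) * (π a * ∑ i, p i * g i a) :=
      Finset.mul_sum _ _ _
    rw [e1, e2, e3, ← Finset.sum_sub_distrib,
      show β ⬝ᵥ m = ∑ a, β a * m a from rfl]
    conv_rhs => rw [Finset.mul_sum]
    refine Finset.sum_congr rfl fun a _ => ?_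
    rw [hβdef, hπa]
    simp only [hg]
    ring
  rw [key] at hV
  have h1 : (fun δ => empVar p (fun i => f (x δ) (Y i)) - empVar p (fun i => f x₀ (Y i))
      - 2 * δ / c * (β ⬝ᵥ m)) =o[𝓝 (0 : ℝ)] fun δ => δ := by
    have := hasDerivAt_iff_isLittleO.mp hV
    have heq : (fun δ => empVar p (fun i => f (x δ) (Y i)) - empVar p (fun i => f (x 0) (Y i))
        - (δ - 0) • (2 / c * (β ⬝ᵥ m)))
        = fun δ => empVar p (fun i => f (x δ) (Y i)) - empVar p (fun i => f x₀ (Y i))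
          - 2 * δ / c * (β ⬝ᵥ m) := by
      funext δ; rw [hx0]; simp [smul_eq_mul]; ring
    rw [heq] at this
    simpa using this
  refine ⟨h1, ?_⟩
  have h2 := h1.const_mul_left (1 / c)
  have heq2 : (fun δ => 1 / c * (empVar p (fun i => f (x δ) (Y i))
      - empVar p (fun i => f x₀ (Y i)) - 2 * δ / c * (β ⬝ᵥ m)))
      = fun δ => 1 / c * empVar p (fun i => f (x δ) (Y i))
        - 1 / c * empVar p (fun i => f x₀ (Y i)) - 2 * δ / c ^ 2 * (β ⬝ᵥ m) := by
    funext δ; ring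
  rwa [heq2] at h2

end
end
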